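/- arXiv:1906.06157 — 4 statements merged into one kernel-verified Lean document; each statement's English description precedes it below -/
import Mathlib

section
/- For every n ≥ 1 there exists an infinite sequence (x_i)_{i=0}^∞ of natural numbers that is an onion De Bruijn sequence of order n: for every k ≥ 1, the windows x_i x_{i+1} ... x_{i+n-1} for 0 ≤ i < k^n are pairwise distinct and enumerate exactly the set [k]^n. Moreover, such a sequence is obtained from the prefer-max construction: for every k ≥ 1, the reversal of the first k^n + n - 1 symbols of (x_i) equals the symbol string of the (k,n)-prefer-max cycle. -/
/-- `preferMaxAux k n i` is the list of windows `[wᵢ, wᵢ₋₁, ..., w₀]` of the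
`(k,n)`-prefer-max cycle, newest first.  The first window is `w₀ = 0^{n-1}(k-1)` and,
if `wᵢ = σx`, then `wᵢ₊₁ = xτ` where `τ` is the maximal symbol in `[k] = {0,…,k-1}`
such that `xτ` has not appeared among `w₀,…,wᵢ` (computed via `Nat.findGreatest`,
which returns `0` if no such symbol exists; the existence of such a symbol at each
step is part of the correctness of the construction). -/
def preferMaxAux (k n : ℕ) : ℕ → List (List ℕ)
  | 0 => [List.replicate (n - 1) 0 ++ [k - 1]]
  | i + 1 =>
    let prev := preferMaxAux k n i
    let w := prev.headI
    (w.tail ++ [Nat.findGreatest (fun τ => (w.tail ++ [τ]) ∉ prev) (k - 1)]) :: prev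

/-- `preferMax k n i` is the `i`-th window `wᵢ` of the `(k,n)`-prefer-max cycle. -/
def preferMax (k n i : ℕ) : List ℕ := (preferMaxAux k n i).headI

/-- The window of length `n` of the infinite sequence `x` starting at position `i`,
namely the word `x i, x (i+1), …, x (i+n-1)`. -/
def window (x : ℕ → ℕ) (n i : ℕ) : List ℕ := (List.range n).map fun t => x (i + t)

/-- `x` is an onion De Bruijn sequence of order `n`: for every `k ≥ 1`, the `k^n`
windows of length `n` starting at positions `0,…,k^n - 1` are pairwise distinct and
constitute exactly the set `[k]^n` of words of length `n` over `{0,…,k-1}`. -/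
def IsOnionDeBruijn (x : ℕ → ℕ) (n : ℕ) : Prop :=
  ∀ k, 1 ≤ k →
    (∀ i < k ^ n, ∀ j < k ^ n, window x n i = window x n j → i = j) ∧
    (∀ w : List ℕ, (∃ i < k ^ n, window x n i = w) ↔ (w.length = n ∧ ∀ σ ∈ w, σ < k))

namespace OnionDB

/-- words of length `n` over `{0,…,k-1}` -/
def Wd (k n : ℕ) (u : List ℕ) : Prop := u.length = n ∧ ∀ σ ∈ u, σ < k

lemma A_zero (k n : ℕ) : preferMaxAux k n 0 = [List.replicate (n - 1) 0 ++ [k - 1]] := rfl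

lemma A_succ (k n i : ℕ) : preferMaxAux k n (i + 1)
    = ((preferMax k n i).tail ++
        [Nat.findGreatest (fun τ => ((preferMax k n i).tail ++ [τ]) ∉ preferMaxAux k n i)
          (k - 1)]) :: preferMaxAux k n i := rfl

lemma W_zero (k n : ℕ) : preferMax k n 0 = List.replicate (n - 1) 0 ++ [k - 1] := rfl

lemma W_succ (k n i : ℕ) : preferMax k n (i + 1)
    = (preferMax k n i).tail ++
        [Nat.findGreatest (fun τ => ((preferMax k n i).tail ++ [τ]) ∉ preferMaxAux k n i)
          (k - 1)] := rfl

lemma length_A (k n : ℕ) : ∀ i, (preferMaxAux k n i).length = i + 1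
  | 0 => rfl
  | i + 1 => by rw [A_succ, List.length_cons, length_A k n i]

lemma A_ne_nil (k n i : ℕ) : preferMaxAux k n i ≠ [] := by
  intro h
  have := length_A k n i
  rw [h] at this
  simp at this

lemma W_mem (k n i : ℕ) : preferMax k n i ∈ preferMaxAux k n i := by
  have h := A_ne_nil k n i
  unfold preferMax
  cases hA : preferMaxAux k n i with
  | nil => exact absurd hA h
  | cons a l => simp

lemma A_suffix (k n : ℕ) {i j : ℕ} (h : i ≤ j) :
    preferMaxAux k n i <:+ preferMaxAux k n j := by
  induction j with
  | zero => simp_all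
  | succ j ih =>
    rcases Nat.eq_or_lt_of_le h with rfl | h'
    · exact List.suffix_rfl
    · exact (ih (Nat.lt_succ_iff.mp h')).trans (by rw [A_succ]; exact List.suffix_cons _ _)

lemma A_mono (k n : ℕ) {i j : ℕ} (h : i ≤ j) {u : List ℕ}
    (hu : u ∈ preferMaxAux k n i) : u ∈ preferMaxAux k n j :=
  (A_suffix k n h).subset hu

lemma mem_A_iff (k n : ℕ) {u : List ℕ} : ∀ {i : ℕ},
    (u ∈ preferMaxAux k n i ↔ ∃ j ≤ i, preferMax k n j = u)
  | 0 => by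
    rw [A_zero]
    simp only [List.mem_singleton]
    constructor
    · rintro rfl; exact ⟨0, le_rfl, rfl⟩
    · rintro ⟨j, hj, rfl⟩; rw [Nat.le_zero.mp hj]; rfl
  | i + 1 => by
    rw [A_succ]
    simp only [List.mem_cons]
    constructor
    · rintro (rfl | hu)
      · exact ⟨i + 1, le_rfl, (W_succ k n i).symm⟩
      · obtain ⟨j, hj, rfl⟩ := (mem_A_iff k n).mp hu
        exact ⟨j, hj.trans (Nat.le_succ i), rfl⟩
    · rintro ⟨j, hj, rfl⟩
      rcases Nat.eq_or_lt_of_le hj with h' | hj'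
      · subst h'; exact Or.inl (W_succ k n i)
      · exact Or.inr ((mem_A_iff k n).mpr ⟨j, Nat.lt_succ_iff.mp hj', rfl⟩)

end OnionDB
namespace OnionDB

/-- number of seen in-edges of vertex `v` -/
def cdl (l : List (List ℕ)) (v : List ℕ) : ℕ := (l.filter fun u => decide (u.tail = v)).length

/-- number of seen out-edges of vertex `v` -/
def csl (l : List (List ℕ)) (v : List ℕ) : ℕ := (l.filter fun u => decide (u.dropLast = v)).length

lemma cdl_cons (u : List ℕ) (l : List (List ℕ)) (v : List ℕ) :
    cdl (u :: l) v = (if u.tail = v then 1 else 0) + cdl l v := by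
  unfold cdl
  rw [List.filter_cons]
  by_cases h : u.tail = v <;> simp [h] <;> omega

lemma csl_cons (u : List ℕ) (l : List (List ℕ)) (v : List ℕ) :
    csl (u :: l) v = (if u.dropLast = v then 1 else 0) + csl l v := by
  unfold csl
  rw [List.filter_cons]
  by_cases h : u.dropLast = v <;> simp [h] <;> omega

lemma csl_pos_of_mem {l : List (List ℕ)} {v : List ℕ} {σ : ℕ} (h : v ++ [σ] ∈ l) :
    1 ≤ csl l v := by
  unfold csl
  rw [Nat.succ_le, List.length_pos_iff_exists_mem]
  exact ⟨v ++ [σ], List.mem_filter.mpr ⟨h, by simp⟩⟩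

lemma not_mem_of_csl_eq_zero {l : List (List ℕ)} {v : List ℕ} {σ : ℕ}
    (h : csl l v = 0) : v ++ [σ] ∉ l := fun hm => by
  have := csl_pos_of_mem hm
  omega

lemma cdl_eq_zero {l : List (List ℕ)} {v : List ℕ}
    (h : ∀ u ∈ l, u.tail ≠ v) : cdl l v = 0 := by
  unfold cdl
  rw [List.length_eq_zero_iff, List.filter_eq_nil_iff]
  intro u hu
  simpa using h u hu

lemma not_cons_mem_of_cdl_eq_zero {l : List (List ℕ)} {v : List ℕ} {σ : ℕ}
    (h : cdl l v = 0) : σ :: v ∉ l := fun hm => by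
  unfold cdl at h
  rw [List.length_eq_zero_iff, List.filter_eq_nil_iff] at h
  exact absurd (by simp : (σ :: v).tail = v) (by simpa using h _ hm)

/-- The walk balance identity. -/
lemma balance (k n : ℕ) : ∀ (i : ℕ) (v : List ℕ),
    cdl (preferMaxAux k n i) v + (if List.replicate (n - 1) 0 = v then 1 else 0)
    = csl (preferMaxAux k n i) v + (if (preferMax k n i).tail = v then 1 else 0)
  | 0, v => by
    rw [A_zero, cdl_cons, csl_cons, W_zero, List.dropLast_concat]
    simp only [cdl, csl, List.filter_nil, List.length_nil, Nat.add_zero, Nat.zero_add]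
    exact Nat.add_comm _ _
  | i + 1, v => by
    rw [A_succ, cdl_cons, csl_cons]
    have hd : ((preferMax k n i).tail ++
        [Nat.findGreatest (fun τ => ((preferMax k n i).tail ++ [τ]) ∉ preferMaxAux k n i)
          (k - 1)]).dropLast = (preferMax k n i).tail := List.dropLast_concat
    rw [hd, ← W_succ]
    have := balance k n i v
    omega

/-- generic: length of a nodup filtered list is at most that of a nodup superlist -/
lemma len_le_of_subset {α : Type*} {l t : List α} (hl : l.Nodup) (hsub : l ⊆ t) :
    l.length ≤ t.length := (hl.subperm hsub).length_le

lemma cdl_le {l : List (List ℕ)} {v : List ℕ} {K n : ℕ} (hn : 1 ≤ n)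
    (hnd : l.Nodup) (hW : ∀ u ∈ l, Wd K n u) : cdl l v ≤ K := by
  have hsub : l.filter (fun u => decide (u.tail = v)) ⊆ (List.range K).map (· :: v) := by
    intro u hu
    obtain ⟨hul, hutail⟩ := List.mem_filter.mp hu
    have hW' := hW u hul
    have hne : u ≠ [] := List.ne_nil_of_length_pos (by rw [hW'.1]; omega)
    have hu' : u.head hne :: u.tail = u := List.cons_head_tail hne
    rw [List.mem_map]
    refine ⟨u.head hne, List.mem_range.mpr (hW'.2 _ (List.head_mem hne)), ?_⟩
    rw [← (by simpa using hutail : u.tail = v), hu']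
  have hnd' := hnd.filter (fun u => decide (u.tail = v))
  have htnd : ((List.range K).map (· :: v)).Nodup :=
    (List.nodup_range (n := K)).map (fun a b h => by simpa using h)
  calc cdl l v ≤ ((List.range K).map (· :: v)).length := len_le_of_subset hnd' hsub
    _ = K := by simp

lemma cdl_le_of_missing {l : List (List ℕ)} {v : List ℕ} {K n σs : ℕ} (hn : 1 ≤ n)
    (hnd : l.Nodup) (hW : ∀ u ∈ l, Wd K n u) (hσs : σs < K) (hmiss : σs :: v ∉ l) :
    cdl l v ≤ K - 1 := by
  have hsub : l.filter (fun u => decide (u.tail = v)) ⊆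
      ((List.range K).filter (fun σ => σ != σs)).map (· :: v) := by
    intro u hu
    obtain ⟨hul, hutail⟩ := List.mem_filter.mp hu
    have hW' := hW u hul
    have hne : u ≠ [] := List.ne_nil_of_length_pos (by rw [hW'.1]; omega)
    have hu' : u.head hne :: u.tail = u := List.cons_head_tail hne
    have htl : u.tail = v := by simpa using hutail
    rw [List.mem_map]
    refine ⟨u.head hne, List.mem_filter.mpr ⟨List.mem_range.mpr (hW'.2 _ (List.head_mem hne)), ?_⟩, by rw [← htl, hu']⟩
    simp only [bne_iff_ne, ne_eq]
    intro heq
    apply hmiss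
    rw [← heq, ← htl, hu']
    exact hul
  have hnd' := hnd.filter (fun u => decide (u.tail = v))
  have htnd : (((List.range K).filter (fun σ => σ != σs)).map (· :: v)).Nodup :=
    (((List.nodup_range (n := K)).filter _)).map (fun a b h => by simpa using h)
  calc cdl l v ≤ (((List.range K).filter (fun σ => σ != σs)).map (· :: v)).length :=
        len_le_of_subset hnd' hsub
    _ = K - 1 := by
        rw [List.length_map, ← (List.nodup_range (n := K)).erase_eq_filter σs,
          List.length_erase_of_mem (List.mem_range.mpr hσs), List.length_range]

lemma cdl_le_one {l : List (List ℕ)} {v : List ℕ} {K n k : ℕ} (hn : 1 ≤ n)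
    (hnd : l.Nodup) (hW : ∀ u ∈ l, Wd K n u) (hk : ∀ u ∈ l, k ∈ u) (hv : k ∉ v) :
    cdl l v ≤ 1 := by
  have hsub : l.filter (fun u => decide (u.tail = v)) ⊆ [k :: v] := by
    intro u hu
    obtain ⟨hul, hutail⟩ := List.mem_filter.mp hu
    have hW' := hW u hul
    have hne : u ≠ [] := List.ne_nil_of_length_pos (by rw [hW'.1]; omega)
    have hu' : u.head hne :: u.tail = u := List.cons_head_tail hne
    have htl : u.tail = v := by simpa using hutail
    have hhead : u.head hne = k := by
      have hkm := hk u hul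
      rw [← hu', List.mem_cons, htl] at hkm
      rcases hkm with h | h
      · exact h.symm
      · exact absurd h hv
    simp only [List.mem_singleton]
    rw [← hu', hhead, htl]
  have hnd' := hnd.filter (fun u => decide (u.tail = v))
  simpa [cdl] using len_le_of_subset hnd' hsub

lemma csl_ge_all {l : List (List ℕ)} {v : List ℕ} {m : ℕ}
    (hnd : l.Nodup) (hall : ∀ σ ≤ m, v ++ [σ] ∈ l) : m + 1 ≤ csl l v := by
  have hsub : (List.range (m + 1)).map (v ++ [·]) ⊆
      l.filter (fun u => decide (u.dropLast = v)) := by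
    intro u hu
    obtain ⟨σ, hσ, rfl⟩ := List.mem_map.mp hu
    exact List.mem_filter.mpr ⟨hall σ (Nat.lt_succ_iff.mp (List.mem_range.mp hσ)), by simp⟩
  have hnd' : ((List.range (m + 1)).map (v ++ [·])).Nodup :=
    List.nodup_range.map (fun a b h => by simpa using h)
  calc m + 1 = ((List.range (m + 1)).map (v ++ [·])).length := by simp
    _ ≤ _ := len_le_of_subset hnd' hsub

end OnionDB
namespace OnionDB

def allW (k : ℕ) : ℕ → List (List ℕ)
  | 0 => [[]]
  | n + 1 => (allW k n).flatMap fun w => (List.range k).map fun σ => w ++ [σ]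

lemma length_allW (k : ℕ) : ∀ n, (allW k n).length = k ^ n
  | 0 => rfl
  | n + 1 => by
    rw [allW, List.length_flatMap]
    have : (List.map (fun w => ((List.range k).map fun σ => w ++ [σ]).length) (allW k n))
        = List.replicate (allW k n).length k := by
      rw [List.eq_replicate_iff]
      constructor
      · simp
      · intro b hb
        obtain ⟨w, _, rfl⟩ := List.mem_map.mp hb
        simp
    rw [this, List.sum_replicate, smul_eq_mul, length_allW k n, pow_succ]

lemma mem_allW (k : ℕ) : ∀ n (u : List ℕ), u ∈ allW k n ↔ Wd k n u
  | 0, u => by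
    simp only [allW, List.mem_singleton, Wd]
    constructor
    · rintro rfl; simp
    · rintro ⟨h, _⟩; exact List.length_eq_zero_iff.mp h
  | n + 1, u => by
    rw [allW, List.mem_flatMap]
    constructor
    · rintro ⟨w, hw, hu⟩
      obtain ⟨σ, hσ, rfl⟩ := List.mem_map.mp hu
      obtain ⟨hlen, hent⟩ := (mem_allW k n w).mp hw
      refine ⟨by simp [hlen], ?_⟩
      intro τ hτ
      rcases List.mem_append.mp hτ with h | h
      · exact hent τ h
      · rw [List.mem_singleton.mp h]; exact List.mem_range.mp hσ
    · rintro ⟨hlen, hent⟩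
      have hne : u ≠ [] := List.ne_nil_of_length_pos (by omega)
      refine ⟨u.dropLast, (mem_allW k n _).mpr ⟨by simp [hlen], ?_⟩, ?_⟩
      · exact fun σ hσ => hent σ (List.dropLast_subset u hσ)
      · rw [List.mem_map]
        refine ⟨u.getLast hne, List.mem_range.mpr (hent _ (List.getLast_mem hne)), ?_⟩
        exact List.dropLast_append_getLast hne

lemma nodup_allW (k : ℕ) : ∀ n, (allW k n).Nodup
  | 0 => by simp [allW]
  | n + 1 => by
    rw [allW, List.nodup_flatMap]
    refine ⟨fun w _ => (List.nodup_range (n := k)).map (fun a b h => by simpa using h), ?_⟩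
    have := nodup_allW k n
    refine List.Pairwise.imp ?_ this
    intro a b hab
    intro u hua hub
    obtain ⟨σ, _, rfl⟩ := List.mem_map.mp hua
    obtain ⟨σ', _, h⟩ := List.mem_map.mp hub
    exact hab (List.append_inj' h.symm rfl).1

lemma findGreatest_congr {P Q : ℕ → Prop} [DecidablePred P] [DecidablePred Q] :
    ∀ b, (∀ m ≤ b, (P m ↔ Q m)) → Nat.findGreatest P b = Nat.findGreatest Q b
  | 0, _ => rfl
  | b + 1, h => by
    rw [Nat.findGreatest_succ, Nat.findGreatest_succ]
    by_cases hp : P (b + 1)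
    · rw [if_pos hp, if_pos ((h (b + 1) le_rfl).mp hp)]
    · rw [if_neg hp, if_neg (fun hq => hp ((h (b + 1) le_rfl).mpr hq)),
        findGreatest_congr b (fun m hm => h m (hm.trans (Nat.le_succ b)))]

/-- If the greedy process is stuck, every word has been seen. -/
lemma stuck_all {k n : ℕ} (hk : 1 ≤ k) (hn : 1 ≤ n) {i : ℕ}
    (hnd : (preferMaxAux k n i).Nodup)
    (hW : ∀ u ∈ preferMaxAux k n i, Wd k n u)
    (hup : ∀ v σ σ', σ ≤ σ' → σ' ≤ k - 1 → v ++ [σ] ∈ preferMaxAux k n i →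
      v ++ [σ'] ∈ preferMaxAux k n i)
    (hstuck : ∀ τ ≤ k - 1, (preferMax k n i).tail ++ [τ] ∈ preferMaxAux k n i) :
    ∀ u, Wd k n u → u ∈ preferMaxAux k n i := by
  set L := preferMaxAux k n i with hL
  set c := (preferMax k n i).tail with hcdef
  -- step A : c = replicate (n-1) 0
  have hcs : k ≤ csl L c := by
    have := csl_ge_all (l := L) (v := c) (m := k - 1) hnd (fun σ hσ => hstuck σ hσ)
    omega
  have hcd : cdl L c ≤ k := cdl_le hn hnd hW
  have hbal := balance k n i c
  rw [← hL, ← hcdef, if_pos rfl] at hbal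
  have hrep : List.replicate (n - 1) 0 = c := by
    by_contra hne
    rw [if_neg hne] at hbal
    omega
  -- all vertices balanced
  have hbal' : ∀ v, cdl L v = csl L v := by
    intro v
    have := balance k n i v
    rw [← hL, ← hcdef, hrep] at this
    omega
  -- step B
  intro u hu
  by_contra hnotin
  have hune : u ≠ [] := List.ne_nil_of_length_pos (by rw [hu.1]; omega)
  set v := u.dropLast with hv
  have hvlen : v.length = n - 1 := by rw [hv, List.length_dropLast, hu.1]
  have hvent : ∀ σ ∈ v, σ < k := fun σ hσ => hu.2 σ (List.dropLast_subset u hσ)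
  have h0 : v ++ [0] ∉ L := by
    intro hmem
    exact hnotin (by
      have := hup v 0 (u.getLast hune) (Nat.zero_le _)
        (by have := hu.2 _ (List.getLast_mem hune); omega) hmem
      rwa [hv, List.dropLast_append_getLast hune] at this)
  -- the chain
  have key : ∀ j, j ≤ n - 1 → (v.drop j ++ List.replicate j 0) ++ [0] ∉ L := by
    intro j
    induction j with
    | zero => intro _; simpa using h0
    | succ j ih =>
      intro hj1
      have hj : j ≤ n - 1 := by omega
      have hjlt : j < n - 1 := by omega
      set vj := v.drop j ++ List.replicate j 0 with hvj
      have hvjlen : vj.length = n - 1 := by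
        rw [hvj, List.length_append, List.length_drop, List.length_replicate, hvlen]; omega
      have hvjne : vj ≠ [] := List.ne_nil_of_length_pos (by omega)
      have hvjent : ∀ σ ∈ vj, σ < k := by
        intro σ hσ
        rcases List.mem_append.mp hσ with h | h
        · exact hvent σ (List.mem_of_mem_drop h)
        · rw [List.eq_of_mem_replicate h]; omega
      have htail : vj.tail = v.drop (j + 1) ++ List.replicate j 0 := by
        rw [hvj]
        have hd : v.drop j = v[j] :: v.drop (j + 1) :=
          List.drop_eq_getElem_cons (by omega)
        rw [hd]; rfl
      have hstep : vj.head hvjne :: (vj.tail ++ [0]) = vj ++ [0] := by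
        rw [← List.cons_append, List.cons_head_tail]
      have hmiss : vj.head hvjne :: (vj.tail ++ [0]) ∉ L := by
        rw [hstep]; exact ih hj
      have hcd2 : cdl L (vj.tail ++ [0]) ≤ k - 1 :=
        cdl_le_of_missing hn hnd hW (hvjent _ (List.head_mem hvjne)) hmiss
      have hcs2 : csl L (vj.tail ++ [0]) ≤ k - 1 := by rw [← hbal' _]; exact hcd2
      intro hmem2
      have hall : ∀ σ ≤ k - 1, (vj.tail ++ [0]) ++ [σ] ∈ L := by
        intro σ hσ
        apply hup _ 0 σ (Nat.zero_le _) hσ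
        have : (v.drop (j + 1) ++ List.replicate (j + 1) 0) = (vj.tail ++ [0]) := by
          rw [htail, List.replicate_succ' (n := j) (a := 0), ← List.append_assoc]
        rwa [this] at hmem2
      have := csl_ge_all hnd hall
      omega
  have hfin := key (n - 1) le_rfl
  rw [List.drop_eq_nil_of_le (by omega), List.nil_append] at hfin
  exact hfin (by rw [← hrep] at hstuck; exact hstuck 0 (Nat.zero_le _))

end OnionDB
namespace OnionDB

/-- The main invariant of the greedy process. -/
lemma inv {k n : ℕ} (hk : 1 ≤ k) (hn : 1 ≤ n) :
    ∀ i, i < k ^ n →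
    (preferMaxAux k n i).Nodup ∧ (∀ u ∈ preferMaxAux k n i, Wd k n u) ∧
    (∀ v σ σ', σ ≤ σ' → σ' ≤ k - 1 → v ++ [σ] ∈ preferMaxAux k n i →
      v ++ [σ'] ∈ preferMaxAux k n i) := by
  intro i
  induction i with
  | zero =>
    intro _
    refine ⟨by simp [A_zero], ?_, ?_⟩
    · intro u hu
      rw [A_zero, List.mem_singleton] at hu
      subst hu
      constructor
      · simp; omega
      · intro σ hσ
        rcases List.mem_append.mp hσ with h | h
        · rw [List.eq_of_mem_replicate h]; omega
        · rw [List.mem_singleton.mp h]; omega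
    · intro v σ σ' hσσ' hσ' hmem
      rw [A_zero, List.mem_singleton] at hmem ⊢
      obtain ⟨h1, h2⟩ := List.append_inj' hmem rfl
      have : σ = k - 1 := by simpa using h2
      have : σ' = k - 1 := by omega
      rw [h1, this]
  | succ i ih =>
    intro hi1
    obtain ⟨hnd, hW, hup⟩ := ih (by omega)
    -- not stuck
    have hnotstuck : ∃ τ ≤ k - 1, (preferMax k n i).tail ++ [τ] ∉ preferMaxAux k n i := by
      by_contra hstk
      push_neg at hstk
      have hall := stuck_all hk hn hnd hW hup hstk
      have hsub : allW k n ⊆ preferMaxAux k n i := fun u hu =>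
        hall u ((mem_allW k n u).mp hu)
      have := len_le_of_subset (nodup_allW k n) hsub
      rw [length_allW, length_A] at this
      omega
    obtain ⟨τ0, hτ0, hτ0n⟩ := hnotstuck
    have hPnew : (preferMax k n i).tail ++
        [Nat.findGreatest (fun τ => ((preferMax k n i).tail ++ [τ]) ∉ preferMaxAux k n i)
          (k - 1)] ∉ preferMaxAux k n i :=
      Nat.findGreatest_spec (P := fun τ => ((preferMax k n i).tail ++ [τ]) ∉ preferMaxAux k n i) hτ0 hτ0n
    have hτle : Nat.findGreatest
        (fun τ => ((preferMax k n i).tail ++ [τ]) ∉ preferMaxAux k n i) (k - 1) ≤ k - 1 :=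
      Nat.findGreatest_le _
    have hWi := hW _ (W_mem k n i)
    refine ⟨?_, ?_, ?_⟩
    · rw [A_succ, List.nodup_cons]
      exact ⟨hPnew, hnd⟩
    · intro u hu
      rw [A_succ, List.mem_cons] at hu
      rcases hu with rfl | hu
      · constructor
        · rw [List.length_append, List.length_tail, hWi.1]
          simp; omega
        · intro σ hσ
          rcases List.mem_append.mp hσ with h | h
          · exact hWi.2 σ (List.tail_subset _ h)
          · rw [List.mem_singleton.mp h]; omega
      · exact hW u hu
    · intro v σ σ' hσσ' hσ' hmem
      rw [A_succ, List.mem_cons] at hmem ⊢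
      rcases hmem with heq | hmem
      · obtain ⟨h1, h2⟩ := List.append_inj' heq rfl
        have h2' : σ = Nat.findGreatest
            (fun τ => ((preferMax k n i).tail ++ [τ]) ∉ preferMaxAux k n i) (k - 1) := by
          simpa using h2
        rcases Nat.eq_or_lt_of_le hσσ' with rfl | hlt
        · left; rw [heq]
        · right
          rw [h1]
          have := Nat.findGreatest_is_greatest (by omega : Nat.findGreatest
            (fun τ => ((preferMax k n i).tail ++ [τ]) ∉ preferMaxAux k n i) (k - 1) < σ') hσ'
          simpa using this
      · exact Or.inr (hup v σ σ' hσσ' hσ' hmem)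

lemma W_wd {k n : ℕ} (hk : 1 ≤ k) (hn : 1 ≤ n) {i : ℕ} (hi : i < k ^ n) :
    Wd k n (preferMax k n i) := (inv hk hn i hi).2.1 _ (W_mem k n i)

/-- Correctness: the first `k^n` windows are exactly all words. -/
lemma korrekt {k n : ℕ} (hk : 1 ≤ k) (hn : 1 ≤ n) :
    ∀ u, Wd k n u ↔ u ∈ preferMaxAux k n (k ^ n - 1) := by
  have hpos : 1 ≤ k ^ n := Nat.one_le_pow n k (by omega)
  obtain ⟨hnd, hW, _⟩ := inv hk hn (k ^ n - 1) (by omega)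
  have hsub : preferMaxAux k n (k ^ n - 1) ⊆ allW k n := fun u hu =>
    (mem_allW k n u).mpr (hW u hu)
  have hperm : (preferMaxAux k n (k ^ n - 1)).Perm (allW k n) := by
    apply (hnd.subperm hsub).perm_of_length_le
    rw [length_allW, length_A]
    omega
  intro u
  rw [← mem_allW k n u]
  exact ⟨fun h => hperm.mem_iff.mpr h, fun h => hperm.mem_iff.mp h⟩

/-- distinct windows -/
lemma W_inj {k n : ℕ} (hk : 1 ≤ k) (hn : 1 ≤ n) {i j : ℕ}
    (hi : i < k ^ n) (hj : j < k ^ n) (h : preferMax k n i = preferMax k n j) : i = j := by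
  have hpos : 1 ≤ k ^ n := Nat.one_le_pow n k (by omega)
  wlog hij : i < j generalizing i j
  · rcases Nat.lt_or_ge j i with h' | h'
    · exact (this hj hi h.symm h').symm
    · omega
  exfalso
  obtain ⟨hndj, _, _⟩ := inv hk hn j hj
  have hj1 : j = (j - 1) + 1 := by omega
  rw [hj1, A_succ, List.nodup_cons, ← W_succ, ← hj1] at hndj
  exact hndj.1 (by rw [← h]; exact A_mono k n (by omega) (W_mem k n i))

end OnionDB
namespace OnionDB

/-- The key claim: before the first `k`-free window, every `k`-free vertex has
been departed via its maximal out-edge. -/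
lemma claim_lem {k n : ℕ} (hk : 1 ≤ k) (hn : 1 ≤ n) {t : ℕ} (ht : t < (k + 1) ^ n)
    (hphase : ∀ u ∈ preferMaxAux (k + 1) n t, k ∈ u)
    (hrep : (preferMax (k + 1) n t).tail = List.replicate (n - 1) 0) :
    ∀ v : List ℕ, v.length = n - 1 → (∀ σ ∈ v, σ < k) →
      v ++ [k] ∈ preferMaxAux (k + 1) n t := by
  obtain ⟨hnd, hW, hup⟩ := inv (by omega : 1 ≤ k + 1) hn t ht
  set L := preferMaxAux (k + 1) n t with hL
  have hup' : ∀ v σ σ', σ ≤ σ' → σ' ≤ k → v ++ [σ] ∈ L → v ++ [σ'] ∈ L := by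
    intro v σ σ' h1 h2 h3
    exact hup v σ σ' h1 (by omega) h3
  have hbal : ∀ v, cdl L v = csl L v := by
    intro v
    have hb := balance (k + 1) n t v
    rw [hrep] at hb
    rw [← hL] at hb
    split_ifs at hb <;> omega
  have hw0 : List.replicate (n - 1) 0 ++ [k] ∈ L := by
    have := A_mono (k + 1) n (Nat.zero_le t) (W_mem (k + 1) n 0)
    rwa [W_zero, Nat.add_sub_cancel] at this
  rcases Nat.lt_or_ge n 2 with hn2 | hn2
  · -- n = 1
    intro v hvlen hvent
    have : n = 1 := by omega
    subst this
    have : v = [] := List.length_eq_zero_iff.mp (by simpa using hvlen)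
    subst this
    simpa using hw0
  -- n ≥ 2
  intro v hvlen hvent
  by_contra hvk
  -- a single chain step
  have chainStep : ∀ u : List ℕ, u.length = n - 1 → (∀ σ ∈ u, σ ≤ k) →
      (∃ σs, σs ≤ k ∧ σs :: u ∉ L) → u ++ [0] ∉ L := by
    rintro u hulen huent ⟨σs, hσs, hmiss⟩
    have hcd : cdl L u ≤ k := by
      have := cdl_le_of_missing (K := k + 1) (n := n) hn hnd hW (by omega) hmiss
      omega
    have hcs : csl L u ≤ k := by rw [← hbal]; exact hcd
    intro hmem
    have hall : ∀ σ ≤ k, u ++ [σ] ∈ L := fun σ hσ => hup' u 0 σ (Nat.zero_le _) hσ hmem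
    have := csl_ge_all hnd hall
    omega
  -- the chain
  have chain : ∀ j, j ≤ n - 2 → (v.drop (j + 1) ++ ([k] ++ List.replicate j 0)) ++ [0] ∉ L := by
    intro j
    induction j with
    | zero =>
      intro _
      apply chainStep
      · rw [List.length_append, List.length_drop, hvlen]; simp; omega
      · intro σ hσ
        rcases List.mem_append.mp hσ with h | h
        · have := hvent σ (List.mem_of_mem_drop h); omega
        · simp at h; omega
      · have hvne : v ≠ [] := List.ne_nil_of_length_pos (by omega)
        refine ⟨v.head hvne, by have := hvent _ (List.head_mem hvne); omega, ?_⟩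
        have : v.head hvne :: (v.drop (0 + 1) ++ ([k] ++ List.replicate 0 0)) = v ++ [k] := by
          simp only [List.replicate_zero, List.append_nil, Nat.zero_add]
          rw [← List.cons_append]
          congr 1
          rw [List.drop_one, List.cons_head_tail]
        rw [this]
        exact hvk
    | succ j ih =>
      intro hj1
      have hj : j ≤ n - 2 := by omega
      set uj := v.drop (j + 1) ++ ([k] ++ List.replicate j 0) with huj
      have hujlen : uj.length = n - 1 := by
        rw [huj]; simp only [List.length_append, List.length_drop, List.length_replicate,
          List.length_cons, List.length_nil, hvlen]
        omega
      have hujne : uj ≠ [] := List.ne_nil_of_length_pos (by omega)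
      have hujent : ∀ σ ∈ uj, σ ≤ k := by
        intro σ hσ
        rcases List.mem_append.mp hσ with h | h
        · have := hvent σ (List.mem_of_mem_drop h); omega
        · rcases List.mem_append.mp h with h' | h'
          · simp at h'; omega
          · rw [List.eq_of_mem_replicate h']; omega
      have htail : uj.tail = v.drop (j + 2) ++ ([k] ++ List.replicate j 0) := by
        rw [huj]
        have hd : v.drop (j + 1) = v[j + 1] :: v.drop (j + 2) :=
          List.drop_eq_getElem_cons (by omega)
        rw [hd]; rfl
      apply chainStep
      · rw [List.length_append, List.length_drop, hvlen]; simp; omega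
      · intro σ hσ
        rcases List.mem_append.mp hσ with h | h
        · have := hvent σ (List.mem_of_mem_drop h); omega
        · rcases List.mem_append.mp h with h' | h'
          · simp at h'; omega
          · rw [List.eq_of_mem_replicate h']; omega
      · refine ⟨uj.head hujne, hujent _ (List.head_mem hujne), ?_⟩
        have heq : uj.head hujne :: (v.drop (j + 1 + 1) ++ ([k] ++ List.replicate (j + 1) 0))
            = uj ++ [0] := by
          rw [List.replicate_succ' (n := j) (a := 0)]
          have : v.drop (j + 2) ++ ([k] ++ (List.replicate j 0 ++ [0]))
              = (v.drop (j + 2) ++ ([k] ++ List.replicate j 0)) ++ [0] := by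
            simp [List.append_assoc]
          rw [show j + 1 + 1 = j + 2 from rfl, this, ← htail, ← List.cons_append,
            List.cons_head_tail]
        rw [heq]
        exact ih hj
  -- conclusion of the chain
  have hfin := chain (n - 2) le_rfl
  rw [List.drop_eq_nil_of_le (by omega), List.nil_append] at hfin
  have hkrep : (([k] ++ List.replicate (n - 2) 0) ++ [0]) = k :: List.replicate (n - 1) 0 := by
    have : List.replicate (n - 2) 0 ++ [0] = List.replicate (n - 1) 0 := by
      rw [← List.replicate_succ' (n := n - 2) (a := 0)]
      congr 1
      omega
    rw [List.append_assoc, this]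
    rfl
  rw [hkrep] at hfin
  -- so the start vertex has no seen in-edges, hence no seen out-edges: contradiction with w₀
  have hcd0 : cdl L (List.replicate (n - 1) 0) = 0 := by
    apply cdl_eq_zero
    intro u hu htl
    have hune : u ≠ [] := by
      have := (hW u hu).1
      exact List.ne_nil_of_length_pos (by omega)
    have hku := hphase u hu
    rw [← List.cons_head_tail hune, List.mem_cons, htl] at hku
    rcases hku with h | h
    · apply hfin
      rw [← List.cons_head_tail hune, htl, ← h] at hu
      exact hu
    · have := List.eq_of_mem_replicate h
      omega
  have hcs0 : csl L (List.replicate (n - 1) 0) = 0 := by rw [← hbal]; exact hcd0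
  exact not_mem_of_csl_eq_zero hcs0 hw0

end OnionDB
namespace OnionDB

lemma findGreatest_pred {P : ℕ → Prop} [DecidablePred P] {k : ℕ} (hk : 1 ≤ k) (h : ¬ P k) :
    Nat.findGreatest P k = Nat.findGreatest P (k - 1) := by
  conv_lhs => rw [show k = (k - 1) + 1 by omega]
  rw [Nat.findGreatest_succ, if_neg (by rwa [show k - 1 + 1 = k by omega])]

/-- After the first `k`-free window, the `(k+1)`-process follows the `k`-process. -/
lemma align {k n : ℕ} (hk : 1 ≤ k) (hn : 1 ≤ n) {i0 : ℕ} (hi0 : 1 ≤ i0)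
    (hphase : ∀ u ∈ preferMaxAux (k + 1) n (i0 - 1), k ∈ u)
    (hrep : (preferMax (k + 1) n (i0 - 1)).tail = List.replicate (n - 1) 0)
    (hclaim : ∀ v : List ℕ, v.length = n - 1 → (∀ σ ∈ v, σ < k) →
      v ++ [k] ∈ preferMaxAux (k + 1) n (i0 - 1)) :
    ∀ j < k ^ n, preferMax (k + 1) n (i0 + j) = preferMax k n j ∧
      (∀ u, k ∉ u → (u ∈ preferMaxAux (k + 1) n (i0 + j) ↔ u ∈ preferMaxAux k n j)) := by
  intro j
  induction j with
  | zero =>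
    intro _
    have ht : i0 - 1 + 1 = i0 := by omega
    have hWeq : preferMax (k + 1) n i0 = List.replicate (n - 1) 0 ++ [k - 1] := by
      rw [← ht, W_succ, hrep, Nat.add_sub_cancel]
      congr 2
      apply Nat.findGreatest_eq_iff.mpr
      refine ⟨by omega, fun _ => ?_, fun m h1 h2 => ?_⟩
      · -- P (k-1) : the word is k-free hence unseen in phase 1
        intro hmem
        have := hphase _ hmem
        rcases List.mem_append.mp this with h | h
        · have := List.eq_of_mem_replicate h; omega
        · simp at h; omega
      · -- no m with k-1 < m ≤ k satisfies P, i.e. rep ++ [k] is seen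
        have hm : m = k := by omega
        subst hm
        intro hmem
        exact hmem (hclaim _ List.length_replicate (fun σ hσ => by
          rw [List.eq_of_mem_replicate hσ]; omega))
    have hA : preferMaxAux (k + 1) n i0
        = (preferMax (k + 1) n i0) :: preferMaxAux (k + 1) n (i0 - 1) := by
      conv_lhs => rw [← ht]
      rw [A_succ, ← W_succ, ht]
    constructor
    · show preferMax (k + 1) n i0 = preferMax k n 0
      rw [hWeq, W_zero]
    · intro u hu
      show u ∈ preferMaxAux (k + 1) n i0 ↔ u ∈ preferMaxAux k n 0
      rw [hA, A_zero, List.mem_cons, List.mem_singleton, hWeq]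
      constructor
      · rintro (h | h)
        · exact h
        · exact absurd (hphase u h) hu
      · exact fun h => Or.inl h
  | succ j ih =>
    intro hj1
    obtain ⟨hWeq, hmem⟩ := ih (by omega)
    have hWj := W_wd hk hn (show j < k ^ n by omega)
    have htl_len : (preferMax k n j).tail.length = n - 1 := by
      rw [List.length_tail, hWj.1]
    have htl_ent : ∀ σ ∈ (preferMax k n j).tail, σ < k :=
      fun σ hσ => hWj.2 σ (List.tail_subset _ hσ)
    have hadd : i0 + (j + 1) = (i0 + j) + 1 := by omega
    have hPk : ¬ ((preferMax k n j).tail ++ [k] ∉ preferMaxAux (k + 1) n (i0 + j)) := fun hno =>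
      hno (A_mono (k + 1) n (by omega) (hclaim _ htl_len htl_ent))
    have hWeq' : preferMax (k + 1) n (i0 + (j + 1)) = preferMax k n (j + 1) := by
      rw [hadd, W_succ, W_succ, hWeq, Nat.add_sub_cancel]
      congr 2
      rw [findGreatest_pred hk hPk]
      apply findGreatest_congr
      intro m hm
      have hfree : k ∉ (preferMax k n j).tail ++ [m] := by
        intro hkin
        rcases List.mem_append.mp hkin with h | h
        · have := htl_ent _ h; omega
        · simp at h; omega
      exact not_congr (hmem _ hfree)
    refine ⟨hWeq', ?_⟩
    intro u hu
    rw [hadd, A_succ, A_succ, List.mem_cons, List.mem_cons, ← W_succ, ← W_succ, ← hadd, hWeq']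
    constructor
    · rintro (h | h)
      · exact Or.inl h
      · exact Or.inr ((hmem u hu).mp h)
    · rintro (h | h)
      · exact Or.inl h
      · exact Or.inr ((hmem u hu).mpr h)

end OnionDB
namespace OnionDB

/-- The onion theorem: the `(k+1)`-ary prefer-max cycle ends with the `k`-ary one. -/
lemma onion {k n : ℕ} (hk : 1 ≤ k) (hn : 1 ≤ n) :
    ∀ j < k ^ n, preferMax (k + 1) n (((k + 1) ^ n - k ^ n) + j) = preferMax k n j := by
  have hposk : 1 ≤ k ^ n := Nat.one_le_pow n k (by omega)
  have hposk1 : 1 ≤ (k + 1) ^ n := Nat.one_le_pow n (k + 1) (by omega)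
  have hkpow : k ^ n ≤ (k + 1) ^ n := Nat.pow_le_pow_left (by omega) n
  have hk1 : 1 ≤ k + 1 := by omega
  -- existence of a k-free window
  have hWd0 : Wd (k + 1) n (List.replicate n 0) :=
    ⟨by simp, fun σ hσ => by rw [List.eq_of_mem_replicate hσ]; omega⟩
  have hmem0 : List.replicate n 0 ∈ preferMaxAux (k + 1) n ((k + 1) ^ n - 1) :=
    (korrekt hk1 hn _).mp hWd0
  obtain ⟨j0, hj0le, hj0⟩ := (mem_A_iff (k + 1) n).mp hmem0
  have hex : ∃ i, k ∉ preferMax (k + 1) n i := by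
    refine ⟨j0, ?_⟩
    rw [hj0]
    intro h
    have := List.eq_of_mem_replicate h
    omega
  set i0 := Nat.find hex with hi0def
  have hfree : k ∉ preferMax (k + 1) n i0 := Nat.find_spec hex
  have hmin : ∀ i < i0, k ∈ preferMax (k + 1) n i := fun i hi => not_not.mp (Nat.find_min hex hi)
  have hi0le : i0 ≤ (k + 1) ^ n - 1 := le_trans (Nat.find_min' hex (by
    rw [hj0]; intro h; have := List.eq_of_mem_replicate h; omega)) hj0le
  have hi0pos : 1 ≤ i0 := by
    rcases Nat.eq_zero_or_pos i0 with h0 | h0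
    · exfalso
      apply hfree
      rw [h0, W_zero, Nat.add_sub_cancel]
      exact List.mem_append.mpr (Or.inr (by simp))
    · omega
  have htlt : i0 - 1 < (k + 1) ^ n := by omega
  have hphase : ∀ u ∈ preferMaxAux (k + 1) n (i0 - 1), k ∈ u := by
    intro u hu
    obtain ⟨j, hj, rfl⟩ := (mem_A_iff (k + 1) n).mp hu
    exact hmin j (by omega)
  obtain ⟨hnd, hWt, hup⟩ := inv hk1 hn (i0 - 1) htlt
  have hts : (i0 - 1) + 1 = i0 := by omega
  have hWi0 : preferMax (k + 1) n i0 = (preferMax (k + 1) n (i0 - 1)).tail ++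
      [Nat.findGreatest (fun τ => ((preferMax (k + 1) n (i0 - 1)).tail ++ [τ])
        ∉ preferMaxAux (k + 1) n (i0 - 1)) (k + 1 - 1)] := by
    conv_lhs => rw [← hts]
    rw [W_succ]
  have hkc : k ∉ (preferMax (k + 1) n (i0 - 1)).tail := by
    intro h
    exact hfree (by rw [hWi0]; exact List.mem_append.mpr (Or.inl h))
  have hWdt := hWt _ (W_mem (k + 1) n (i0 - 1))
  have hclen : (preferMax (k + 1) n (i0 - 1)).tail.length = n - 1 := by
    rw [List.length_tail, hWdt.1]
  have hcent : ∀ σ ∈ (preferMax (k + 1) n (i0 - 1)).tail, σ < k := by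
    intro σ hσ
    have h1 := hWdt.2 σ (List.tail_subset _ hσ)
    have h2 : σ ≠ k := fun h => hkc (h ▸ hσ)
    omega
  have hτne : Nat.findGreatest (fun τ => ((preferMax (k + 1) n (i0 - 1)).tail ++ [τ])
      ∉ preferMaxAux (k + 1) n (i0 - 1)) (k + 1 - 1) ≠ k := by
    intro h
    apply hfree
    rw [hWi0, h]
    exact List.mem_append.mpr (Or.inr (by simp))
  have hτle : Nat.findGreatest (fun τ => ((preferMax (k + 1) n (i0 - 1)).tail ++ [τ])
      ∉ preferMaxAux (k + 1) n (i0 - 1)) (k + 1 - 1) ≤ k + 1 - 1 := Nat.findGreatest_le _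
  have hck : (preferMax (k + 1) n (i0 - 1)).tail ++ [k] ∈ preferMaxAux (k + 1) n (i0 - 1) := by
    have := Nat.findGreatest_is_greatest
      (k := k)
      (P := fun τ => ((preferMax (k + 1) n (i0 - 1)).tail ++ [τ])
        ∉ preferMaxAux (k + 1) n (i0 - 1)) (n := k + 1 - 1) (by omega) (by omega)
    exact not_not.mp this
  -- the current vertex is the all-zero vertex
  have hrep : (preferMax (k + 1) n (i0 - 1)).tail = List.replicate (n - 1) 0 := by
    have hcd1 : cdl (preferMaxAux (k + 1) n (i0 - 1)) ((preferMax (k + 1) n (i0 - 1)).tail) ≤ 1 :=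
      cdl_le_one hn hnd hWt hphase hkc
    have hcs1 : 1 ≤ csl (preferMaxAux (k + 1) n (i0 - 1)) ((preferMax (k + 1) n (i0 - 1)).tail) :=
      csl_pos_of_mem hck
    have hb := balance (k + 1) n (i0 - 1) ((preferMax (k + 1) n (i0 - 1)).tail)
    rw [if_pos rfl] at hb
    by_contra hne
    rw [if_neg (fun h => hne h.symm)] at hb
    omega
  have hclaim := claim_lem hk hn htlt hphase hrep
  have halign := align hk hn hi0pos hphase hrep hclaim
  -- i0 ≤ D
  have hile : i0 ≤ (k + 1) ^ n - k ^ n := by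
    have hsubf : preferMaxAux (k + 1) n (i0 - 1) ⊆
        (allW (k + 1) n).filter (fun u => decide (k ∈ u)) := by
      intro u hu
      exact List.mem_filter.mpr ⟨(mem_allW (k + 1) n u).mpr (hWt u hu), by
        simp [hphase u hu]⟩
    have hlen1 := len_le_of_subset hnd hsubf
    rw [length_A] at hlen1
    -- the k-free words among all (k+1)-ary words are exactly the k-ary words
    have hperm2 : ((allW (k + 1) n).filter (fun u => !decide (k ∈ u))).Perm (allW k n) := by
      apply List.Subperm.antisymm
      · apply List.Nodup.subperm ((nodup_allW (k + 1) n).filter _)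
        intro u hu
        obtain ⟨hu1, hu2⟩ := List.mem_filter.mp hu
        obtain ⟨hlen, hent⟩ := (mem_allW (k + 1) n u).mp hu1
        have hnk : k ∉ u := by simpa using hu2
        apply (mem_allW k n u).mpr
        refine ⟨hlen, fun σ hσ => ?_⟩
        have := hent σ hσ
        have : σ ≠ k := fun h => hnk (h ▸ hσ)
        omega
      · apply List.Nodup.subperm (nodup_allW k n)
        intro u hu
        obtain ⟨hlen, hent⟩ := (mem_allW k n u).mp hu
        apply List.mem_filter.mpr
        refine ⟨(mem_allW (k + 1) n u).mpr ⟨hlen, fun σ hσ => by have := hent σ hσ; omega⟩, ?_⟩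
        simp only [Bool.not_eq_true', decide_eq_false_iff_not]
        intro hku
        have := hent k hku
        omega
    have hsplit := (List.filter_append_perm (fun u => decide (k ∈ u)) (allW (k + 1) n)).length_eq
    rw [List.length_append, length_allW, hperm2.length_eq, length_allW] at hsplit
    omega
  -- D ≤ i0
  have hige : (k + 1) ^ n - k ^ n ≤ i0 := by
    by_contra hlt
    push_neg at hlt
    have hmlt : i0 + k ^ n ≤ (k + 1) ^ n - 1 := by omega
    obtain ⟨hndm, _, _⟩ := inv hk1 hn (i0 + k ^ n) (by omega)
    have hm1 : (i0 + k ^ n - 1) + 1 = i0 + k ^ n := by omega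
    rw [← hm1, A_succ, List.nodup_cons] at hndm
    apply hndm.1
    -- show the next window was already seen
    have hj1 : i0 + k ^ n - 1 = i0 + (k ^ n - 1) := by omega
    have hWm1 : preferMax (k + 1) n (i0 + (k ^ n - 1)) = preferMax k n (k ^ n - 1) :=
      (halign (k ^ n - 1) (by omega)).1
    have hWdj := W_wd hk hn (show k ^ n - 1 < k ^ n by omega)
    have htl_len : (preferMax k n (k ^ n - 1)).tail.length = n - 1 := by
      rw [List.length_tail, hWdj.1]
    have htl_ent : ∀ σ ∈ (preferMax k n (k ^ n - 1)).tail, σ < k :=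
      fun σ hσ => hWdj.2 σ (List.tail_subset _ hσ)
    set G := Nat.findGreatest (fun τ => ((preferMax (k + 1) n (i0 + k ^ n - 1)).tail ++ [τ])
      ∉ preferMaxAux (k + 1) n (i0 + k ^ n - 1)) (k + 1 - 1) with hGdef
    have hGle : G ≤ k := by
      have := Nat.findGreatest_le (P := fun τ => ((preferMax (k + 1) n (i0 + k ^ n - 1)).tail ++ [τ])
        ∉ preferMaxAux (k + 1) n (i0 + k ^ n - 1)) (k + 1 - 1)
      omega
    have htleq : (preferMax (k + 1) n (i0 + k ^ n - 1)).tail = (preferMax k n (k ^ n - 1)).tail := by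
      rw [hj1, hWm1]
    rw [htleq]
    rcases Nat.eq_or_lt_of_le hGle with hGk | hGk
    · -- the maximal symbol: seen in phase 1
      rw [hGk]
      exact A_mono (k + 1) n (by omega) (hclaim _ htl_len htl_ent)
    · -- a small symbol: the word is k-free, seen in the k-free block
      have hWdsm : Wd k n ((preferMax k n (k ^ n - 1)).tail ++ [G]) := by
        constructor
        · rw [List.length_append, htl_len]; simp; omega
        · intro σ hσ
          rcases List.mem_append.mp hσ with h | h
          · exact htl_ent σ h
          · simp at h; omega
      have := (korrekt hk hn _).mp hWdsm
      obtain ⟨j2, hj2, hWj2⟩ := (mem_A_iff k n).mp this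
      have : preferMax (k + 1) n (i0 + j2) = (preferMax k n (k ^ n - 1)).tail ++ [G] := by
        rw [(halign j2 (by omega)).1, hWj2]
      rw [← this]
      exact A_mono (k + 1) n (by omega) (W_mem (k + 1) n (i0 + j2))
  intro j hj
  have : (k + 1) ^ n - k ^ n = i0 := by omega
  rw [this]
  exact (halign j hj).1

end OnionDB
namespace OnionDB

/-- the symbol string of the `(k,n)`-prefer-max cycle -/
def Sstr (n k m : ℕ) : ℕ := (preferMax k n (min m (k ^ n - 1))).getD (m - min m (k ^ n - 1)) 0

/-- the onion De Bruijn sequence -/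
def xseq (n j : ℕ) : ℕ := Sstr n (j + 2) ((j + 2) ^ n + n - 2 - j)

lemma getD_tail (l : List ℕ) (t d : ℕ) : l.tail.getD t d = l.getD (t + 1) d := by
  cases l <;> simp [List.getD]

lemma getD_shift {k n : ℕ} (hk : 1 ≤ k) (hn : 1 ≤ n) {i t : ℕ} (hi : i < k ^ n)
    (ht : t + 1 ≤ n - 1) :
    (preferMax k n (i + 1)).getD t 0 = (preferMax k n i).getD (t + 1) 0 := by
  rw [W_succ, List.getD_append _ _ _ t (by
    rw [List.length_tail, (W_wd hk hn hi).1]; omega)]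
  exact getD_tail _ _ _

lemma walkShift {k n : ℕ} (hk : 1 ≤ k) (hn : 1 ≤ n) :
    ∀ (e : ℕ) {i t : ℕ}, i + e ≤ k ^ n - 1 → t + e ≤ n - 1 →
    (preferMax k n (i + e)).getD t 0 = (preferMax k n i).getD (t + e) 0 := by
  intro e
  induction e with
  | zero => intro i t _ _; rfl
  | succ e ih =>
    intro i t h1 h2
    have hie : i + e < k ^ n := by
      have : 1 ≤ k ^ n := Nat.one_le_pow n k (by omega)
      omega
    have : i + (e + 1) = (i + e) + 1 := rfl
    rw [this, getD_shift hk hn hie (by omega), ih (by omega) (by omega)]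
    congr 1
    omega

lemma Sstr_window {k n : ℕ} (hk : 1 ≤ k) (hn : 1 ≤ n) {i t : ℕ} (hi : i < k ^ n) (ht : t < n) :
    Sstr n k (i + t) = (preferMax k n i).getD t 0 := by
  unfold Sstr
  rcases le_or_gt (i + t) (k ^ n - 1) with hle | hgt
  · rw [min_eq_left hle, Nat.sub_self]
    have := walkShift hk hn t (i := i) (t := 0) (by omega) (by omega)
    rw [this, Nat.zero_add]
  · rw [min_eq_right (by omega : k ^ n - 1 ≤ i + t)]
    have he : i + (k ^ n - 1 - i) = k ^ n - 1 := by omega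
    have ht' : (i + t - (k ^ n - 1)) + (k ^ n - 1 - i) = t := by omega
    calc (preferMax k n (k ^ n - 1)).getD (i + t - (k ^ n - 1)) 0
        = (preferMax k n (i + (k ^ n - 1 - i))).getD (i + t - (k ^ n - 1)) 0 := by rw [he]
      _ = (preferMax k n i).getD ((i + t - (k ^ n - 1)) + (k ^ n - 1 - i)) 0 :=
          walkShift hk hn _ (by omega) (by omega)
      _ = _ := by rw [ht']

lemma Sstr_succ {k n : ℕ} (hk : 1 ≤ k) (hn : 1 ≤ n) {m : ℕ} (hm : m < k ^ n + n - 1) :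
    Sstr n k m = Sstr n (k + 1) (m + ((k + 1) ^ n - k ^ n)) := by
  have hposk : 1 ≤ k ^ n := Nat.one_le_pow n k (by omega)
  have hkpow : k ^ n ≤ (k + 1) ^ n := Nat.pow_le_pow_left (by omega) n
  rcases le_or_gt m (k ^ n - 1) with hle | hgt
  · have h1 : Sstr n k m = (preferMax k n m).getD 0 0 := by
      have := Sstr_window hk hn (i := m) (t := 0) (by omega) (by omega)
      simpa using this
    have h2 : Sstr n (k + 1) (m + ((k + 1) ^ n - k ^ n))
        = (preferMax (k + 1) n (((k + 1) ^ n - k ^ n) + m)).getD 0 0 := by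
      have := Sstr_window (show 1 ≤ k + 1 by omega) hn
        (i := ((k + 1) ^ n - k ^ n) + m) (t := 0) (by omega) (by omega)
      rw [← this]
      congr 1
      omega
    rw [h1, h2, onion hk hn m (by omega)]
  · have ht : m - (k ^ n - 1) < n := by omega
    have h1 : Sstr n k m = (preferMax k n (k ^ n - 1)).getD (m - (k ^ n - 1)) 0 := by
      have := Sstr_window hk hn (i := k ^ n - 1) (t := m - (k ^ n - 1)) (by omega) ht
      rw [← this]
      congr 1
      omega
    have h2 : Sstr n (k + 1) (m + ((k + 1) ^ n - k ^ n))
        = (preferMax (k + 1) n (((k + 1) ^ n - k ^ n) + (k ^ n - 1))).getD (m - (k ^ n - 1)) 0 := by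
      have := Sstr_window (show 1 ≤ k + 1 by omega) hn
        (i := ((k + 1) ^ n - k ^ n) + (k ^ n - 1)) (t := m - (k ^ n - 1)) (by omega) ht
      rw [← this]
      congr 1
      omega
    rw [h1, h2, onion hk hn (k ^ n - 1) (by omega)]

lemma Sstr_lift {k n : ℕ} (hk : 1 ≤ k) (hn : 1 ≤ n) :
    ∀ (d : ℕ) {m : ℕ}, m < k ^ n + n - 1 →
    Sstr n k m = Sstr n (k + d) (m + ((k + d) ^ n - k ^ n)) := by
  intro d
  induction d with
  | zero => intro m hm; simp
  | succ d ih =>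
    intro m hm
    rw [show k + (d + 1) = k + d + 1 from rfl]
    have hposk : 1 ≤ k ^ n := Nat.one_le_pow n k (by omega)
    have hkd : k ^ n ≤ (k + d) ^ n := Nat.pow_le_pow_left (by omega) n
    have hkd1 : (k + d) ^ n ≤ (k + d + 1) ^ n := Nat.pow_le_pow_left (by omega) n
    rw [ih hm]
    have hm2 : m + ((k + d) ^ n - k ^ n) < (k + d) ^ n + n - 1 := by omega
    rw [Sstr_succ (show 1 ≤ k + d by omega) hn hm2]
    congr 1
    omega

lemma xseq_eq {n : ℕ} (hn : 1 ≤ n) {k j : ℕ} (hk : 1 ≤ k) (hj : j < k ^ n + n - 1) :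
    xseq n j = Sstr n k (k ^ n + n - 2 - j) := by
  have hposk : 1 ≤ k ^ n := Nat.one_le_pow n k (by omega)
  have h2 : j + 2 ≤ (j + 2) ^ n := Nat.le_self_pow (by omega) _
  unfold xseq
  rcases le_or_gt k (j + 2) with hkj | hkj
  · have hpow : k ^ n ≤ (j + 2) ^ n := Nat.pow_le_pow_left (by omega) n
    have hlift := Sstr_lift hk hn (j + 2 - k) (m := k ^ n + n - 2 - j) (by omega)
    have hd : k + (j + 2 - k) = j + 2 := by omega
    rw [hd] at hlift
    rw [hlift]
    congr 1
    omega
  · have hpow : (j + 2) ^ n ≤ k ^ n := Nat.pow_le_pow_left (by omega) n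
    have hlift := Sstr_lift (show 1 ≤ j + 2 by omega) hn (k - (j + 2))
      (m := (j + 2) ^ n + n - 2 - j) (by omega)
    have hd : (j + 2) + (k - (j + 2)) = k := by omega
    rw [hd] at hlift
    rw [hlift]
    congr 1
    omega

end OnionDB
namespace OnionDB

lemma take_drop_window {k n : ℕ} (hk : 1 ≤ k) (hn : 1 ≤ n) {i : ℕ} (hi : i < k ^ n) :
    ((((List.range (k ^ n + n - 1)).map (xseq n)).reverse.drop i).take n) = preferMax k n i := by
  have hposk : 1 ≤ k ^ n := Nat.one_le_pow n k (by omega)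
  have hWd := W_wd hk hn hi
  apply List.ext_getElem
  · rw [List.length_take, List.length_drop, List.length_reverse, List.length_map,
      List.length_range, hWd.1]
    omega
  intro u h1 h2
  have hu : u < n := by rwa [hWd.1] at h2
  rw [List.getElem_take, List.getElem_drop]
  simp only [List.getElem_reverse, List.getElem_map, List.getElem_range,
    List.length_map, List.length_range]
  rw [xseq_eq hn hk (show k ^ n + n - 1 - 1 - (i + u) < k ^ n + n - 1 by omega)]
  have harg : k ^ n + n - 2 - (k ^ n + n - 1 - 1 - (i + u)) = i + u := by omega
  rw [harg, Sstr_window hk hn hi hu, List.getD_eq_getElem _ _ (by rw [hWd.1]; exact hu)]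

lemma window_rev {k n : ℕ} (hk : 1 ≤ k) (hn : 1 ≤ n) {i : ℕ} (hi : i < k ^ n) :
    window (xseq n) n i = (preferMax k n (k ^ n - 1 - i)).reverse := by
  have hposk : 1 ≤ k ^ n := Nat.one_le_pow n k (by omega)
  have hi' : k ^ n - 1 - i < k ^ n := by omega
  have hWd := W_wd hk hn hi'
  unfold window
  apply List.ext_getElem
  · rw [List.length_map, List.length_range, List.length_reverse, hWd.1]
  intro t h1 h2
  have ht : t < n := by simpa using h1
  simp only [List.getElem_map, List.getElem_range, List.getElem_reverse]
  have hconv : ∀ (m : ℕ) (hm : m < (preferMax k n (k ^ n - 1 - i)).length),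
      (preferMax k n (k ^ n - 1 - i))[m] = (preferMax k n (k ^ n - 1 - i)).getD m 0 :=
    fun m hm => (List.getD_eq_getElem _ _ hm).symm
  rw [hconv _ (by rw [hWd.1]; omega), hWd.1]
  rw [xseq_eq hn hk (show i + t < k ^ n + n - 1 by omega)]
  have harg : k ^ n + n - 2 - (i + t) = (k ^ n - 1 - i) + (n - 1 - t) := by omega
  rw [harg, Sstr_window hk hn hi' (by omega)]

end OnionDB

theorem exists_onionDeBruijn' (n : ℕ) (hn : 1 ≤ n) :
    ∃ x : ℕ → ℕ, IsOnionDeBruijn x n ∧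
      ∀ k, 1 ≤ k → ∀ i < k ^ n,
        ((((List.range (k ^ n + n - 1)).map x).reverse.drop i).take n = preferMax k n i) := by
  refine ⟨OnionDB.xseq n, ?_, fun k hk i hi => OnionDB.take_drop_window hk hn hi⟩
  intro k hk
  have hposk : 1 ≤ k ^ n := Nat.one_le_pow n k (by omega)
  constructor
  · intro i hi j hj hw
    rw [OnionDB.window_rev hk hn hi, OnionDB.window_rev hk hn hj] at hw
    have := OnionDB.W_inj hk hn (show k ^ n - 1 - i < k ^ n by omega)
      (show k ^ n - 1 - j < k ^ n by omega) (List.reverse_injective hw)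
    omega
  · intro w
    constructor
    · rintro ⟨i, hi, rfl⟩
      rw [OnionDB.window_rev hk hn hi]
      have hWd := OnionDB.W_wd hk hn (show k ^ n - 1 - i < k ^ n by omega)
      exact ⟨by rw [List.length_reverse, hWd.1],
        fun σ hσ => hWd.2 σ (List.mem_reverse.mp hσ)⟩
    · rintro ⟨hlen, hent⟩
      have hWd : OnionDB.Wd k n w.reverse :=
        ⟨by rw [List.length_reverse, hlen], fun σ hσ => hent σ (List.mem_reverse.mp hσ)⟩
      obtain ⟨j, hj, hWj⟩ := (OnionDB.mem_A_iff k n).mp ((OnionDB.korrekt hk hn _).mp hWd)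
      refine ⟨k ^ n - 1 - j, by omega, ?_⟩
      rw [OnionDB.window_rev hk hn (by omega)]
      have hjj : k ^ n - 1 - (k ^ n - 1 - j) = j := by omega
      rw [hjj, hWj, List.reverse_reverse]

/-- For every `n ≥ 1` there exists an onion De Bruijn sequence of order `n`, and it is
obtained from the prefer-max construction: for every `k ≥ 1`, the reversal of the first
`k^n + n - 1` symbols of the sequence is the symbol string of the `(k,n)`-prefer-max
cycle, i.e. its window at each position `i < k^n` is the window `wᵢ` of that cycle. -/
theorem exists_onionDeBruijn (n : ℕ) (hn : 1 ≤ n) :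
    ∃ x : ℕ → ℕ, IsOnionDeBruijn x n ∧
      ∀ k, 1 ≤ k → ∀ i < k ^ n,
        ((((List.range (k ^ n + n - 1)).map x).reverse.drop i).take n = preferMax k n i) :=
  exists_onionDeBruijn' n hn
end

section
/- Let (x_i)_{i=0}^∞ be an onion De Bruijn sequence of order n. Then for every word y = σ_1...σ_{n-1} ∈ ℕ^{n-1}, setting μ_y = max_i σ_i, the words yτ for τ ≥ μ_y appear in increasing order in (x_i): for all σ, σ' with μ_y ≤ σ < σ', the (unique) position at which the word yσ occurs as a window of (x_i) is strictly smaller than the position at which yσ' occurs. -/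
/-- In an onion De Bruijn sequence of order `n`, for every word `y ∈ ℕ^{n-1}` with
maximal symbol `μ_y`, the words `yτ` for `τ ≥ μ_y` appear in increasing order: if
`μ_y ≤ σ < σ'` and `yσ` occurs as a window at position `i` while `yσ'` occurs as a
window at position `i'`, then `i < i'`. -/
theorem onionDeBruijn_increasing (n : ℕ) (x : ℕ → ℕ) (hx : IsOnionDeBruijn x n)
    (y : List ℕ) (hy : y.length = n - 1)
    (σ σ' : ℕ) (hσ : ∀ τ ∈ y, τ ≤ σ) (hσσ' : σ < σ')
    (i i' : ℕ) (hi : window x n i = y ++ [σ]) (hi' : window x n i' = y ++ [σ']) :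
    i < i' := by
  have hlen : ∀ m j, (window x m j).length = m := by intro m j; simp [window]
  have hn : n = y.length + 1 := by
    have h := hlen n i; rw [hi] at h; simpa using h.symm
  set k := σ + 1 with hk
  obtain ⟨huniq, hex⟩ := hx k (by omega)
  obtain ⟨j, hj, hwj⟩ := (hex (y ++ [σ])).mpr ⟨by simp [hn], by
    intro τ hτ
    rcases List.mem_append.mp hτ with h | h
    · exact lt_of_le_of_lt (hσ τ h) (Nat.lt_succ_self σ)
    · simp at h; omega⟩
  have hij : i = j := by
    set K := max i j + 1 with hK
    obtain ⟨hu, _⟩ := hx K (by omega)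
    have hKn : K ≤ K ^ n := Nat.le_self_pow (by omega) K
    exact hu i (by omega) j (by omega) (by rw [hi, hwj])
  have hi'ge : k ^ n ≤ i' := by
    by_contra h
    push_neg at h
    have h2 := ((hex (y ++ [σ'])).mp ⟨i', h, hi'⟩).2 σ' (by simp)
    omega
  omega
end

section
/- Every binary De Bruijn sequence of order n can be extended to a binary De Bruijn sequence of order n+2: if s is a string of length 2^n + n - 1 over {0,1} whose windows of length n are pairwise distinct, then there exists a string t of length 2^{n+2} + n + 1 over {0,1} whose windows of length n+2 are pairwise distinct and which has s as a prefix. -/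
namespace DBExt

def win (t : List ℕ) (i k : ℕ) : List ℕ := (t.drop i).take k

lemma win_length {t : List ℕ} {i k : ℕ} (h : i + k ≤ t.length) : (win t i k).length = k := by
  simp only [win, List.length_take, List.length_drop]; omega

lemma win_getElem {t : List ℕ} {i k j : ℕ} (h : i + k ≤ t.length) (hj : j < k)
    {hj' : j < (win t i k).length} :
    (win t i k)[j] = t[i+j]'(by omega) := by
  simp [win, List.getElem_take, List.getElem_drop]

lemma win_take {t : List ℕ} {i k j : ℕ} (hjk : j ≤ k) : (win t i k).take j = win t i j := by
  simp only [win, List.take_take, Nat.min_eq_left hjk]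

lemma win_cons {t : List ℕ} {i k : ℕ} (h : i < t.length) :
    win t i (k+1) = t[i] :: win t (i+1) k := by
  unfold win
  rw [List.drop_eq_getElem_cons h, List.take_succ_cons]

lemma win_drop1 {t : List ℕ} {i k : ℕ} :
    (win t i (k+1)).drop 1 = win t (i+1) k := by
  rcases Nat.lt_or_ge i t.length with h | h
  · rw [win_cons h]; simp
  · have h1 : t.drop i = [] := List.drop_eq_nil_of_le h
    have h2 : t.drop (i+1) = [] := List.drop_eq_nil_of_le (by omega)
    simp [win, h1, h2]

lemma win_of_take {t : List ℕ} {i k N : ℕ} (h : i + k ≤ N) :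
    win (t.take N) i k = win t i k := by
  simp only [win, List.drop_take, List.take_take]
  congr 1
  omega

lemma win_of_drop {t : List ℕ} {a i k : ℕ} : win (t.drop a) i k = win t (a+i) k := by
  simp only [win, List.drop_drop]

lemma win_self {u : List ℕ} {k : ℕ} (h : u.length = k) : win u 0 k = u := by
  simp [win, h]

lemma win_snoc {t : List ℕ} {i k : ℕ} (h : i + k < t.length) :
    win t i (k+1) = win t i k ++ [t[i+k]] := by
  apply List.ext_getElem
  · rw [win_length (by omega)]
    simp [win_length (show i + k ≤ t.length by omega)]
  · intro j h1 h2
    have hj : j < k + 1 := by rwa [win_length (by omega)] at h1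
    rw [win_getElem (by omega) hj]
    rcases Nat.lt_or_ge j k with hc | hc
    · rw [List.getElem_append_left (by rw [win_length (by omega)]; omega)]
      rw [win_getElem (by omega) hc]
    · have : j = k := by omega
      subst this
      have hw : (win t i j).length = j := win_length (by omega)
      rw [List.getElem_append_right (by omega)]
      simp [hw]


/-- `u` occurs as a `k`-window of `t`. -/
def memw (t u : List ℕ) (k : ℕ) : Prop := ∃ i, i + k ≤ t.length ∧ win t i k = u

/-- all `k`-windows of `t` are pairwise distinct -/
def distW (t : List ℕ) (k : ℕ) : Prop :=
  ∀ i j, i + k ≤ t.length → j + k ≤ t.length → win t i k = win t j k → i = j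

lemma win_append_left {A B : List ℕ} {i k : ℕ} (h : i + k ≤ A.length) :
    win (A ++ B) i k = win A i k := by
  have : A = (A ++ B).take A.length := List.take_left.symm
  rw [show win A i k = win ((A ++ B).take A.length) i k by rw [← this], win_of_take h]

lemma win_append_right {A B : List ℕ} {i k : ℕ} :
    win (A ++ B) (A.length + i) k = win B i k := by
  rw [← win_of_drop, List.drop_left]

lemma win_binary {t : List ℕ} {i k : ℕ} (hb : ∀ σ ∈ t, σ < 2) :
    ∀ σ ∈ win t i k, σ < 2 :=
  fun σ hσ => hb σ (List.mem_of_mem_drop (List.mem_of_mem_take hσ))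

lemma memw_of_prefix {s t u : List ℕ} {k : ℕ} (hp : s <+: t) (h : memw s u k) :
    memw t u k := by
  obtain ⟨i, hi, hw⟩ := h
  obtain ⟨r, hr⟩ := hp
  exact ⟨i, by rw [← hr]; simp; omega, by rw [← hr, win_append_left hi, hw]⟩

lemma win_prefix_eq {s t : List ℕ} {i k : ℕ} (hp : s <+: t) (h : i + k ≤ s.length) :
    win t i k = win s i k := by
  obtain ⟨r, hr⟩ := hp
  rw [← hr, win_append_left h]

/-- snoc: windows of `t ++ [c]` at old positions -/
lemma win_snoc_old {t : List ℕ} {c : ℕ} {i k : ℕ} (h : i + k ≤ t.length) :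
    win (t ++ [c]) i k = win t i k := win_append_left h

/-- snoc: the new window of `t ++ [c]` -/
lemma win_snoc_new {t : List ℕ} {c : ℕ} {k : ℕ} (h : k ≤ t.length) :
    win (t ++ [c]) (t.length - k) (k+1) = win t (t.length - k) k ++ [c] := by
  unfold win
  rw [List.drop_append_of_le_length (by omega)]
  have h2 : (t.drop (t.length - k)).length = k := by simp; omega
  have hX : List.take (k+1) (t.drop (t.length-k)) = t.drop (t.length-k) :=
    List.take_of_length_le (by omega)
  have hXk : List.take k (t.drop (t.length-k)) = t.drop (t.length-k) :=
    List.take_of_length_le (by omega)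
  rw [List.take_append, hX, hXk, h2]
  simp

/-! ### binary value encoding -/

def val : List ℕ → ℕ
  | [] => 0
  | a :: l => a * 2 ^ l.length + val l

def word : ℕ → ℕ → List ℕ
  | 0, _ => []
  | k+1, v => (v / 2^k) :: word k (v % 2^k)

lemma val_lt {l : List ℕ} (hb : ∀ σ ∈ l, σ < 2) : val l < 2 ^ l.length := by
  induction l with
  | nil => simp [val]
  | cons a l ih =>
    have ha : a < 2 := hb a (by simp)
    have hl := ih (fun σ hσ => hb σ (List.mem_cons_of_mem _ hσ))
    simp only [val, List.length_cons, pow_succ]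
    nlinarith [pow_pos (by norm_num : (0:ℕ) < 2) l.length]

lemma val_inj {l l' : List ℕ} (hb : ∀ σ ∈ l, σ < 2) (hb' : ∀ σ ∈ l', σ < 2)
    (hl : l.length = l'.length) (h : val l = val l') : l = l' := by
  induction l generalizing l' with
  | nil => cases l' with
    | nil => rfl
    | cons a l' => simp at hl
  | cons a l ih =>
    cases l' with
    | nil => simp at hl
    | cons a' l' =>
      simp only [List.length_cons, Nat.succ_inj] at hl
      have ha : a < 2 := hb a (by simp)
      have ha' : a' < 2 := hb' a' (by simp)
      have h1 := val_lt (l := l) (fun σ hσ => hb σ (List.mem_cons_of_mem _ hσ))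
      have h2 := val_lt (l := l') (fun σ hσ => hb' σ (List.mem_cons_of_mem _ hσ))
      simp only [val, hl] at h
      rw [hl] at h1
      have haa : a = a' := by
        rcases Nat.lt_trichotomy a a' with hc | hc | hc
        · have hstep : (a+1) * 2^l'.length ≤ a' * 2^l'.length :=
            Nat.mul_le_mul_right _ hc
          have hexp : (a+1) * 2^l'.length = a*2^l'.length + 2^l'.length := by ring
          linarith
        · exact hc
        · have hstep : (a'+1) * 2^l'.length ≤ a * 2^l'.length :=
            Nat.mul_le_mul_right _ hc
          have hexp : (a'+1) * 2^l'.length = a'*2^l'.length + 2^l'.length := by ring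
          linarith
      subst haa
      have : val l = val l' := by omega
      rw [ih (fun σ hσ => hb σ (List.mem_cons_of_mem _ hσ))
        (fun σ hσ => hb' σ (List.mem_cons_of_mem _ hσ)) hl this]

lemma word_length (k v : ℕ) : (word k v).length = k := by
  induction k generalizing v with
  | zero => rfl
  | succ k ih => simp [word, ih]

lemma word_binary {k v : ℕ} (h : v < 2^k) : ∀ σ ∈ word k v, σ < 2 := by
  induction k generalizing v with
  | zero => simp [word]
  | succ k ih =>
    intro σ hσ
    simp only [word, List.mem_cons] at hσ
    rcases hσ with h1 | h1
    · subst h1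
      rw [pow_succ] at h
      exact Nat.div_lt_of_lt_mul (by omega)
    · exact ih (Nat.mod_lt _ (pow_pos (by norm_num) k)) σ h1

lemma val_word {k v : ℕ} (h : v < 2^k) : val (word k v) = v := by
  induction k generalizing v with
  | zero => simp at h; simp [word, val, h]
  | succ k ih =>
    simp only [word, val, word_length]
    rw [ih (Nat.mod_lt _ (pow_pos (by norm_num) k))]
    rw [Nat.div_add_mod' v (2^k)]  -- v/2^k * 2^k + v % 2^k = v

/-! ### distinctness lift -/

lemma distW_mono {t : List ℕ} {k j : ℕ} (h : distW t k) : distW t (k + j) := by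
  intro i i' hi hi' he
  apply h i i' (by omega) (by omega)
  have := congrArg (List.take k) he
  rwa [win_take (by omega), win_take (by omega)] at this

/-! ### counting -/

lemma length_le_of_distW {t : List ℕ} {k : ℕ} (hk : 1 ≤ k) (hb : ∀ σ ∈ t, σ < 2)
    (hd : distW t k) : t.length ≤ 2^k + k - 1 := by
  by_contra hc
  push_neg at hc
  have h2 : 0 < 2^k := pow_pos (by norm_num) k
  have key : (Finset.range (t.length - k + 1)).card ≤ (Finset.range (2^k)).card := by
    apply Finset.card_le_card_of_injOn (fun i => val (win t i k))
    · intro i hi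
      simp only [Finset.mem_coe, Finset.mem_range] at hi ⊢
      have hik : i + k ≤ t.length := by omega
      have := val_lt (win_binary (i := i) (k := k) hb)
      rwa [win_length hik] at this
    · intro i hi j hj he
      simp only [Finset.coe_range, Set.mem_Iio] at hi hj
      have hik : i + k ≤ t.length := by omega
      have hjk : j + k ≤ t.length := by omega
      exact hd i j hik hjk (val_inj (win_binary hb) (win_binary hb)
        (by rw [win_length hik, win_length hjk]) he)
  simp only [Finset.card_range] at key
  omega

lemma exists_unused {t : List ℕ} {k : ℕ} (hk : 1 ≤ k) (hb : ∀ σ ∈ t, σ < 2)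
    (hd : distW t k) (hlt : t.length < 2^k + k - 1) :
    ∃ u, u.length = k ∧ (∀ σ ∈ u, σ < 2) ∧ ¬ memw t u k := by
  have h2 : 0 < 2^k := pow_pos (by norm_num) k
  have hsub : ((Finset.range (t.length - k + 1)).image (fun i => val (win t i k))) ⊆
      Finset.range (2^k) := by
    intro v hv
    simp only [Finset.mem_image, Finset.mem_range] at hv ⊢
    obtain ⟨i, hi, hiv⟩ := hv
    rcases Nat.lt_or_ge t.length k with hc | hc
    · subst hiv
      have : win t i k = [] ∨ (win t i k).length < k := by
        rcases Nat.lt_or_ge (i + k) (t.length + 1) with h' | h'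
        · omega
        · right
          simp only [win, List.length_take, List.length_drop]
          omega
      rcases this with h' | h'
      · rw [h']; simpa [val] using h2
      · calc val (win t i k) < 2 ^ (win t i k).length := val_lt (win_binary hb)
          _ ≤ 2 ^ k := Nat.pow_le_pow_right (by norm_num) (by omega)
    · subst hiv
      calc val (win t i k) < 2 ^ (win t i k).length := val_lt (win_binary hb)
        _ ≤ 2 ^ k := Nat.pow_le_pow_right (by norm_num) (by
            simp only [win, List.length_take, List.length_drop]; omega)
  have hne : ∃ v ∈ Finset.range (2^k), v ∉
      ((Finset.range (t.length - k + 1)).image (fun i => val (win t i k))) := by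
    by_contra hall
    push_neg at hall
    have heq : Finset.range (2^k) ⊆
        ((Finset.range (t.length - k + 1)).image (fun i => val (win t i k))) := hall
    have hc1 := Finset.card_le_card heq
    have hc2 := Finset.card_image_le (s := Finset.range (t.length - k + 1))
      (f := fun i => val (win t i k))
    simp only [Finset.card_range] at hc1 hc2
    have h4 : 2 ≤ 2^k := by
      calc 2 = 2^1 := (pow_one 2).symm
        _ ≤ 2^k := Nat.pow_le_pow_right (by norm_num) hk
    omega
  obtain ⟨v, hv, hvn⟩ := hne
  simp only [Finset.mem_range] at hv
  refine ⟨word k v, word_length k v, word_binary hv, ?_⟩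
  rintro ⟨i, hik, hwin⟩
  apply hvn
  simp only [Finset.mem_image, Finset.mem_range]
  exact ⟨i, by omega, by rw [hwin, val_word hv]⟩

/-! ### decompositions -/

lemma decomp_last {u : List ℕ} {k : ℕ} (h : u.length = k+1) :
    win u 0 k ++ [u.getD k 0] = u := by
  have hk : k < u.length := by omega
  rw [List.getD_eq_getElem u 0 hk]
  have hw : win u 0 k = u.take k := by simp [win]
  have h2 : u.take (k+1) = u.take k ++ [u[k]] := by
    rw [List.take_succ, List.getElem?_eq_getElem hk]
    rfl
  rw [hw, ← h2, List.take_of_length_le (by omega)]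

lemma decomp_head {u : List ℕ} {k : ℕ} (h : u.length = k+1) :
    u.getD 0 0 :: win u 1 k = u := by
  have h0 : 0 < u.length := by omega
  rw [List.getD_eq_getElem u 0 h0]
  have := win_cons (t := u) (i := 0) (k := k) h0
  rw [win_self h] at this
  exact this.symm

lemma drop1_eq_win {u : List ℕ} {k : ℕ} (h : u.length = k+1) :
    win u 1 k = u.drop 1 := by
  simp only [win]
  exact List.take_of_length_le (by simp [h])


/-! ### occurrences and in-neighbour windows -/

/-- the window of length n+2 just before an occurrence at `r ≥ 1` -/
lemma in_window {n : ℕ} {t v : List ℕ} {r : ℕ} (hr : 1 ≤ r) (hb : r + (n+1) ≤ t.length)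
    (hv : win t r (n+1) = v) : win t (r-1) (n+2) = t.getD (r-1) 0 :: v := by
  have hlt : r - 1 < t.length := by omega
  rw [List.getD_eq_getElem t 0 hlt]
  have := win_cons (t := t) (i := r-1) (k := n+1) hlt
  rw [show r - 1 + 1 = r by omega, hv] at this
  exact this

lemma occ_of_out {n : ℕ} {t v : List ℕ} {c : ℕ} {p : ℕ} (hp : p + (n+2) ≤ t.length)
    (hvlen : v.length = n+1) (h : win t p (n+2) = v ++ [c]) : win t p (n+1) = v := by
  have := congrArg (List.take (n+1)) h
  rwa [win_take (by omega), List.take_left' hvlen] at this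

/-- same-string distinct in-neighbour chars -/
lemma innbr_ne_same {n : ℕ} {t vd : List ℕ} {r1 r2 : ℕ} (hd : distW t (n+2))
    (h1r : 1 ≤ r1) (h1b : r1 + (n+1) ≤ t.length) (h1w : win t r1 (n+1) = vd)
    (h2r : 1 ≤ r2) (h2b : r2 + (n+1) ≤ t.length) (h2w : win t r2 (n+1) = vd)
    (hne : r1 ≠ r2) : t.getD (r1-1) 0 ≠ t.getD (r2-1) 0 := by
  intro hc
  have e1 := in_window h1r h1b h1w
  have e2 := in_window h2r h2b h2w
  rw [hc] at e1
  have := hd (r1-1) (r2-1) (by omega) (by omega) (by rw [e1, e2])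
  omega

/-- cross-string distinct in-neighbour chars -/
lemma innbr_ne_cross {n : ℕ} {t d vd : List ℕ} {r1 r2 : ℕ}
    (hdisj : ∀ u, memw d u (n+2) → ¬ memw t u (n+2))
    (h1r : 1 ≤ r1) (h1b : r1 + (n+1) ≤ t.length) (h1w : win t r1 (n+1) = vd)
    (h2r : 1 ≤ r2) (h2b : r2 + (n+1) ≤ d.length) (h2w : win d r2 (n+1) = vd) :
    t.getD (r1-1) 0 ≠ d.getD (r2-1) 0 := by
  intro hc
  have e1 := in_window h1r h1b h1w
  have e2 := in_window h2r h2b h2w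
  rw [hc] at e1
  exact hdisj _ ⟨r2-1, by omega, e2⟩ ⟨r1-1, by omega, e1⟩

lemma getD_lt_two {t : List ℕ} (hb : ∀ σ ∈ t, σ < 2) {r : ℕ} (hr : r < t.length) :
    t.getD r 0 < 2 := by
  rw [List.getD_eq_getElem t 0 hr]
  exact hb _ (List.getElem_mem hr)

/-! ### L1 : a maximal string is closed -/

lemma closed_of_blocked {n : ℕ} {t : List ℕ} (hb : ∀ σ ∈ t, σ < 2) (hd : distW t (n+2))
    (hblock : ∀ c < 2, memw t (win t (t.length - (n+1)) (n+1) ++ [c]) (n+2)) :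
    win t 0 (n+1) = win t (t.length - (n+1)) (n+1) := by
  obtain ⟨p0, hp0, hw0⟩ := hblock 0 (by norm_num)
  obtain ⟨p1, hp1, hw1⟩ := hblock 1 (by norm_num)
  have hlen : n + 2 ≤ t.length := by omega
  set F := t.length - (n+1) with hF
  have hvlen : (win t F (n+1)).length = n+1 := win_length (by omega)
  have hocc0 : win t p0 (n+1) = win t F (n+1) := occ_of_out hp0 hvlen hw0
  have hocc1 : win t p1 (n+1) = win t F (n+1) := occ_of_out hp1 hvlen hw1
  have hne : p0 ≠ p1 := by
    intro h
    rw [h, hw1] at hw0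
    simpa using hw0
  by_cases hz0 : p0 = 0
  · rw [← hz0]; exact hocc0
  by_cases hz1 : p1 = 0
  · rw [← hz1]; exact hocc1
  · exfalso
    have hF1 : 1 ≤ F := by omega
    have c01 := innbr_ne_same hd (by omega) (by omega) hocc0 (by omega) (by omega) hocc1 hne
    have c0F := innbr_ne_same hd (by omega) (by omega) hocc0 hF1 (by omega) rfl (by omega)
    have c1F := innbr_ne_same hd (by omega) (by omega) hocc1 hF1 (by omega) rfl (by omega)
    have l0 : t.getD (p0-1) 0 < 2 := getD_lt_two hb (by omega)
    have l1 : t.getD (p1-1) 0 < 2 := getD_lt_two hb (by omega)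
    have lF : t.getD (F-1) 0 < 2 := getD_lt_two hb (by omega)
    omega

/-! ### balance -/

lemma balance {n : ℕ} {t v : List ℕ} (hb : ∀ σ ∈ t, σ < 2) (hd : distW t (n+2))
    (hlen : n+2 ≤ t.length)
    (hcl : win t 0 (n+1) = win t (t.length - (n+1)) (n+1))
    (hvlen : v.length = n+1)
    (h0 : memw t (v ++ [0]) (n+2)) (h1 : memw t (v ++ [1]) (n+2)) :
    ∀ a < 2, memw t (a :: v) (n+2) := by
  obtain ⟨p0, hp0, hw0⟩ := h0
  obtain ⟨p1, hp1, hw1⟩ := h1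
  set F := t.length - (n+1) with hF
  have hF1 : 1 ≤ F := by omega
  have hocc0 : win t p0 (n+1) = v := occ_of_out hp0 hvlen hw0
  have hocc1 : win t p1 (n+1) = v := occ_of_out hp1 hvlen hw1
  have hne : p0 ≠ p1 := by
    intro h
    rw [h, hw1] at hw0
    simpa using hw0
  -- find two non-initial occurrences r1 ≠ r2 of v
  obtain ⟨r1, r2, hr1, hr1b, hr1w, hr2, hr2b, hr2w, hrne⟩ :
      ∃ r1 r2, 1 ≤ r1 ∧ r1 + (n+1) ≤ t.length ∧ win t r1 (n+1) = v ∧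
        1 ≤ r2 ∧ r2 + (n+1) ≤ t.length ∧ win t r2 (n+1) = v ∧ r1 ≠ r2 := by
    by_cases hz0 : p0 = 0
    · refine ⟨p1, F, by omega, by omega, hocc1, hF1, by omega, ?_, by omega⟩
      rw [← hcl, ← hz0]; exact hocc0
    by_cases hz1 : p1 = 0
    · refine ⟨p0, F, by omega, by omega, hocc0, hF1, by omega, ?_, by omega⟩
      rw [← hcl, ← hz1]; exact hocc1
    · exact ⟨p0, p1, by omega, by omega, hocc0, by omega, by omega, hocc1, hne⟩
  have hcne := innbr_ne_same hd hr1 hr1b hr1w hr2 hr2b hr2w hrne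
  have l1 : t.getD (r1-1) 0 < 2 := getD_lt_two hb (by omega)
  have l2 : t.getD (r2-1) 0 < 2 := getD_lt_two hb (by omega)
  intro a ha
  have : a = t.getD (r1-1) 0 ∨ a = t.getD (r2-1) 0 := by omega
  rcases this with h | h
  · exact ⟨r1 - 1, by omega, by rw [in_window hr1 hr1b hr1w, ← h]⟩
  · exact ⟨r2 - 1, by omega, by rw [in_window hr2 hr2b hr2w, ← h]⟩


/-! ### L2 : a maximal detour returns to its start -/

lemma detour_closed {n : ℕ} {t d : List ℕ}
    (hbt : ∀ σ ∈ t, σ < 2) (hdt : distW t (n+2)) (hlent : n+2 ≤ t.length)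
    (hcl : win t 0 (n+1) = win t (t.length - (n+1)) (n+1))
    (hbd : ∀ σ ∈ d, σ < 2) (hdd : distW d (n+2)) (hlend : n+2 ≤ d.length)
    (hdisj : ∀ u, memw d u (n+2) → ¬ memw t u (n+2))
    (hblock : ∀ c < 2, memw t (win d (d.length - (n+1)) (n+1) ++ [c]) (n+2) ∨
                        memw d (win d (d.length - (n+1)) (n+1) ++ [c]) (n+2)) :
    win d 0 (n+1) = win d (d.length - (n+1)) (n+1) := by
  by_contra hne0
  set vd := win d (d.length - (n+1)) (n+1) with hvd
  set fd := d.length - (n+1) with hfd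
  set Ft := t.length - (n+1) with hFt
  have hvdlen : vd.length = n+1 := win_length (by omega)
  have hfd1 : 1 ≤ fd := by omega
  have hFt1 : 1 ≤ Ft := by omega
  have hoccfd : win d fd (n+1) = vd := rfl
  have hdz : ∀ p, win d p (n+1) = vd → 1 ≤ p := by
    intro p hw
    rcases Nat.eq_zero_or_pos p with h | h
    · exfalso; apply hne0; rw [h] at hw; exact hw
    · exact h
  have hchard : ∀ r, 1 ≤ r → r + (n+1) ≤ d.length → d.getD (r-1) 0 < 2 :=
    fun r h1 h2 => getD_lt_two hbd (by omega)
  have hchart : ∀ r, 1 ≤ r → r + (n+1) ≤ t.length → t.getD (r-1) 0 < 2 :=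
    fun r h1 h2 => getD_lt_two hbt (by omega)
  rcases hblock 0 (by norm_num) with h0 | h0 <;> rcases hblock 1 (by norm_num) with h1 | h1
  · -- both tokens in t
    obtain ⟨p0, hp0, hw0⟩ := h0
    obtain ⟨p1, hp1, hw1⟩ := h1
    have ho0 : win t p0 (n+1) = vd := occ_of_out hp0 hvdlen hw0
    have ho1 : win t p1 (n+1) = vd := occ_of_out hp1 hvdlen hw1
    have hne : p0 ≠ p1 := by
      intro h; rw [h, hw1] at hw0; simp at hw0
    by_cases hz0 : p0 = 0
    · have hoF : win t Ft (n+1) = vd := by rw [← hcl, ← hz0]; exact ho0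
      have c1 := innbr_ne_same hdt (by omega) (by omega) ho1 hFt1 (by omega) hoF (by omega)
      have c2 := innbr_ne_cross hdisj (by omega) (by omega) ho1 hfd1 (by omega) hoccfd
      have c3 := innbr_ne_cross hdisj hFt1 (by omega) hoF hfd1 (by omega) hoccfd
      have := hchart p1 (by omega) (by omega)
      have := hchart Ft hFt1 (by omega)
      have := hchard fd hfd1 (by omega)
      omega
    by_cases hz1 : p1 = 0
    · have hoF : win t Ft (n+1) = vd := by rw [← hcl, ← hz1]; exact ho1
      have c1 := innbr_ne_same hdt (by omega) (by omega) ho0 hFt1 (by omega) hoF (by omega)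
      have c2 := innbr_ne_cross hdisj (by omega) (by omega) ho0 hfd1 (by omega) hoccfd
      have c3 := innbr_ne_cross hdisj hFt1 (by omega) hoF hfd1 (by omega) hoccfd
      have := hchart p0 (by omega) (by omega)
      have := hchart Ft hFt1 (by omega)
      have := hchard fd hfd1 (by omega)
      omega
    · have c1 := innbr_ne_same hdt (by omega) (by omega) ho0 (by omega) (by omega) ho1 hne
      have c2 := innbr_ne_cross hdisj (by omega) (by omega) ho0 hfd1 (by omega) hoccfd
      have c3 := innbr_ne_cross hdisj (by omega) (by omega) ho1 hfd1 (by omega) hoccfd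
      have := hchart p0 (by omega) (by omega)
      have := hchart p1 (by omega) (by omega)
      have := hchard fd hfd1 (by omega)
      omega
  · -- token0 in t, token1 in d
    obtain ⟨p0, hp0, hw0⟩ := h0
    obtain ⟨p1, hp1, hw1⟩ := h1
    have ho0 : win t p0 (n+1) = vd := occ_of_out hp0 hvdlen hw0
    have ho1 : win d p1 (n+1) = vd := occ_of_out hp1 hvdlen hw1
    have hp1z : 1 ≤ p1 := hdz p1 ho1
    have hp1fd : p1 ≠ fd := by omega
    by_cases hz0 : p0 = 0
    · have hoF : win t Ft (n+1) = vd := by rw [← hcl, ← hz0]; exact ho0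
      have c1 := innbr_ne_cross hdisj hFt1 (by omega) hoF hp1z (by omega) ho1
      have c2 := innbr_ne_cross hdisj hFt1 (by omega) hoF hfd1 (by omega) hoccfd
      have c3 := innbr_ne_same hdd hp1z (by omega) ho1 hfd1 (by omega) hoccfd hp1fd
      have := hchart Ft hFt1 (by omega)
      have := hchard p1 hp1z (by omega)
      have := hchard fd hfd1 (by omega)
      omega
    · have c1 := innbr_ne_cross hdisj (by omega) (by omega) ho0 hp1z (by omega) ho1
      have c2 := innbr_ne_cross hdisj (by omega) (by omega) ho0 hfd1 (by omega) hoccfd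
      have c3 := innbr_ne_same hdd hp1z (by omega) ho1 hfd1 (by omega) hoccfd hp1fd
      have := hchart p0 (by omega) (by omega)
      have := hchard p1 hp1z (by omega)
      have := hchard fd hfd1 (by omega)
      omega
  · -- token0 in d, token1 in t
    obtain ⟨p0, hp0, hw0⟩ := h0
    obtain ⟨p1, hp1, hw1⟩ := h1
    have ho0 : win d p0 (n+1) = vd := occ_of_out hp0 hvdlen hw0
    have ho1 : win t p1 (n+1) = vd := occ_of_out hp1 hvdlen hw1
    have hp0z : 1 ≤ p0 := hdz p0 ho0
    have hp0fd : p0 ≠ fd := by omega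
    by_cases hz1 : p1 = 0
    · have hoF : win t Ft (n+1) = vd := by rw [← hcl, ← hz1]; exact ho1
      have c1 := innbr_ne_cross hdisj hFt1 (by omega) hoF hp0z (by omega) ho0
      have c2 := innbr_ne_cross hdisj hFt1 (by omega) hoF hfd1 (by omega) hoccfd
      have c3 := innbr_ne_same hdd hp0z (by omega) ho0 hfd1 (by omega) hoccfd hp0fd
      have := hchart Ft hFt1 (by omega)
      have := hchard p0 hp0z (by omega)
      have := hchard fd hfd1 (by omega)
      omega
    · have c1 := innbr_ne_cross hdisj (by omega) (by omega) ho1 hp0z (by omega) ho0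
      have c2 := innbr_ne_cross hdisj (by omega) (by omega) ho1 hfd1 (by omega) hoccfd
      have c3 := innbr_ne_same hdd hp0z (by omega) ho0 hfd1 (by omega) hoccfd hp0fd
      have := hchart p1 (by omega) (by omega)
      have := hchard p0 hp0z (by omega)
      have := hchard fd hfd1 (by omega)
      omega
  · -- both tokens in d
    obtain ⟨p0, hp0, hw0⟩ := h0
    obtain ⟨p1, hp1, hw1⟩ := h1
    have ho0 : win d p0 (n+1) = vd := occ_of_out hp0 hvdlen hw0
    have ho1 : win d p1 (n+1) = vd := occ_of_out hp1 hvdlen hw1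
    have hp0z : 1 ≤ p0 := hdz p0 ho0
    have hp1z : 1 ≤ p1 := hdz p1 ho1
    have hne : p0 ≠ p1 := by
      intro h; rw [h, hw1] at hw0; simp at hw0
    have c1 := innbr_ne_same hdd hp0z (by omega) ho0 hp1z (by omega) ho1 hne
    have c2 := innbr_ne_same hdd hp0z (by omega) ho0 hfd1 (by omega) hoccfd (by omega)
    have c3 := innbr_ne_same hdd hp1z (by omega) ho1 hfd1 (by omega) hoccfd (by omega)
    have := hchard p0 hp0z (by omega)
    have := hchard p1 hp1z (by omega)
    have := hchard fd hfd1 (by omega)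
    omega


/-! ### connectivity of the graph of words unused by `s` -/

def unusedS (n : ℕ) (s u : List ℕ) : Prop :=
  u.length = n+2 ∧ (∀ σ ∈ u, σ < 2) ∧ ¬ memw s u (n+2)

def adjS (n : ℕ) (s : List ℕ) (y z : List ℕ) : Prop :=
  ∃ u, unusedS n s u ∧ ((win u 0 (n+1) = y ∧ win u 1 (n+1) = z) ∨
                        (win u 0 (n+1) = z ∧ win u 1 (n+1) = y))

def ReachS (n : ℕ) (s : List ℕ) : List ℕ → List ℕ → Prop :=
  Relation.ReflTransGen (adjS n s)

/-- at most one of the four words `a :: x ++ [b]` is a window of `s` -/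
lemma middle_unique {n : ℕ} {s : List ℕ}
    (hs : distW s n) {x : List ℕ} (hx : x.length = n) {a b a' b' : ℕ}
    (h1 : memw s (a :: (x ++ [b])) (n+2)) (h2 : memw s (a' :: (x ++ [b'])) (n+2)) :
    a = a' ∧ b = b' := by
  obtain ⟨i, hi, hwi⟩ := h1
  obtain ⟨j, hj, hwj⟩ := h2
  have hmid : ∀ (p : ℕ) (aa bb : ℕ), p + (n+2) ≤ s.length →
      win s p (n+2) = aa :: (x ++ [bb]) → win s (p+1) n = x := by
    intro p aa bb hp hw
    have h1' : (win s p (n+2)).drop 1 = win s (p+1) (n+1) := win_drop1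
    rw [hw] at h1'
    simp only [List.drop_one, List.tail_cons] at h1'
    have := congrArg (List.take n) h1'.symm
    rwa [win_take (by omega), List.take_left' hx] at this
  have hieq : i = j := by
    have := hs (i+1) (j+1) (by omega) (by omega)
      (by rw [hmid i a b hi hwi, hmid j a' b' hj hwj])
    omega
  rw [hieq, hwj] at hwi
  simp only [List.cons.injEq] at hwi
  obtain ⟨hA, hB⟩ := hwi
  have := List.append_cancel_left hB
  simp only [List.cons.injEq] at this
  exact ⟨hA.symm, this.1.symm⟩

lemma edge_take {n : ℕ} {x : List ℕ} (hx : x.length = n) {a b : ℕ} :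
    win (a :: (x ++ [b])) 0 (n+1) = a :: x := by
  have h : a :: (x ++ [b]) = (a :: x) ++ [b] := by simp
  simp only [win, List.drop_zero, h]
  exact List.take_left' (by simp [hx])

lemma edge_drop {n : ℕ} {x : List ℕ} (hx : x.length = n) {a b : ℕ} :
    win (a :: (x ++ [b])) 1 (n+1) = x ++ [b] := by
  simp only [win, List.drop_one, List.tail_cons]
  exact List.take_of_length_le (by simp [hx])

lemma edge_unusedS {n : ℕ} {s : List ℕ} {x : List ℕ} (hx : x.length = n)
    (hxb : ∀ σ ∈ x, σ < 2) {a b : ℕ} (ha : a < 2) (hb : b < 2)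
    (h : ¬ memw s (a :: (x ++ [b])) (n+2)) : unusedS n s (a :: (x ++ [b])) := by
  refine ⟨by simp [hx], ?_, h⟩
  intro σ hσ
  simp only [List.mem_cons, List.mem_append, List.mem_singleton] at hσ
  rcases hσ with h' | h' | h' | h'
  · exact h' ▸ ha
  · exact hxb σ h'
  · exact h' ▸ hb
  · simp at h'

/-- clique step : from `a :: x` we can reach `x ++ [c]` through unused words -/
lemma reach_step {n : ℕ} {s : List ℕ} (hs : distW s n) {x : List ℕ} (hx : x.length = n)
    (hxb : ∀ σ ∈ x, σ < 2) {a c : ℕ} (ha : a < 2) (hc : c < 2) :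
    ReachS n s (a :: x) (x ++ [c]) := by
  by_cases h : memw s (a :: (x ++ [c])) (n+2)
  · -- the direct edge is used; detour through the three unused edges
    have hu1 : ¬ memw s (a :: (x ++ [1-c])) (n+2) := by
      intro h'
      have := (middle_unique hs hx h h').2
      omega
    have hu2 : ¬ memw s ((1-a) :: (x ++ [1-c])) (n+2) := by
      intro h'
      have := (middle_unique hs hx h h').1
      omega
    have hu3 : ¬ memw s ((1-a) :: (x ++ [c])) (n+2) := by
      intro h'
      have := (middle_unique hs hx h h').1
      omega
    refine Relation.ReflTransGen.head
      ⟨a :: (x ++ [1-c]), edge_unusedS hx hxb ha (by omega) hu1,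
        Or.inl ⟨edge_take hx, edge_drop hx⟩⟩ ?_
    refine Relation.ReflTransGen.head
      ⟨(1-a) :: (x ++ [1-c]), edge_unusedS hx hxb (by omega) (by omega) hu2,
        Or.inr ⟨edge_take hx, edge_drop hx⟩⟩ ?_
    exact Relation.ReflTransGen.single
      ⟨(1-a) :: (x ++ [c]), edge_unusedS hx hxb (by omega) hc hu3,
        Or.inl ⟨edge_take hx, edge_drop hx⟩⟩
  · exact Relation.ReflTransGen.single
      ⟨a :: (x ++ [c]), edge_unusedS hx hxb ha hc h, Or.inl ⟨edge_take hx, edge_drop hx⟩⟩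

lemma reach_drop1 {n : ℕ} {s : List ℕ} (hs : distW s n) {y : List ℕ}
    (hy : y.length = n+1) (hyb : ∀ σ ∈ y, σ < 2) {c : ℕ} (hc : c < 2) :
    ReachS n s y (y.drop 1 ++ [c]) := by
  cases y with
  | nil => simp at hy
  | cons a x =>
    simp only [List.drop_one, List.tail_cons]
    exact reach_step hs (by simpa using hy) (fun σ h => hyb σ (List.mem_cons_of_mem _ h))
      (hyb a (by simp)) hc

lemma reach_all {n : ℕ} {s : List ℕ} (hs : distW s n) {y z : List ℕ}
    (hy : y.length = n+1) (hyb : ∀ σ ∈ y, σ < 2)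
    (hz : z.length = n+1) (hzb : ∀ σ ∈ z, σ < 2) :
    ReachS n s y z := by
  have key : ∀ j, j ≤ n+1 → ReachS n s y (y.drop j ++ z.take j) := by
    intro j
    induction j with
    | zero =>
      intro _
      simp only [List.drop_zero, List.take_zero, List.append_nil]
      exact Relation.ReflTransGen.refl
    | succ j ih =>
      intro hj
      refine Relation.ReflTransGen.trans (ih (by omega)) ?_
      have hjz : j < z.length := by omega
      have hwlen : (y.drop j ++ z.take j).length = n+1 := by
        simp only [List.length_append, List.length_drop, List.length_take]
        omega
      have hwb : ∀ σ ∈ y.drop j ++ z.take j, σ < 2 := by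
        intro σ hσ
        rcases List.mem_append.1 hσ with h' | h'
        · exact hyb σ (List.mem_of_mem_drop h')
        · exact hzb σ (List.mem_of_mem_take h')
      have hstep := reach_drop1 hs hwlen hwb (c := z.getD j 0)
        (by rw [List.getD_eq_getElem z 0 hjz]; exact hzb _ (List.getElem_mem hjz))
      have heq : (y.drop j ++ z.take j).drop 1 ++ [z.getD j 0] =
          y.drop (j+1) ++ z.take (j+1) := by
        rw [List.drop_append_of_le_length (by simp; omega)]
        rw [List.getD_eq_getElem z 0 hjz]
        have h1 : (y.drop j).drop 1 = y.drop (j+1) := by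
          rw [List.drop_drop]
        have h2 : z.take (j+1) = z.take j ++ [z[j]] := by
          rw [List.take_succ, List.getElem?_eq_getElem hjz]
          rfl
        rw [h1, h2, List.append_assoc]
      rw [heq] at hstep
      exact hstep
  have := key (n+1) le_rfl
  rwa [List.drop_eq_nil_of_le (by omega), List.take_of_length_le (by omega),
    List.nil_append] at this


/-! ### Good strings -/

def Good (n : ℕ) (s t : List ℕ) : Prop :=
  s <+: t ∧ (∀ σ ∈ t, σ < 2) ∧ distW t (n+2)

lemma blocked_of_max {n : ℕ} {s t : List ℕ} (hG : Good n s t)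
    (hmax : ∀ c < 2, ¬ Good n s (t ++ [c])) :
    ∀ c < 2, memw t (win t (t.length - (n+1)) (n+1) ++ [c]) (n+2) := by
  obtain ⟨hp, hb, hd⟩ := hG
  intro c hc
  have hb' : ∀ σ ∈ t ++ [c], σ < 2 := by
    intro σ hσ
    rcases List.mem_append.1 hσ with h' | h'
    · exact hb σ h'
    · simp at h'; omega
  have hnd : ¬ distW (t ++ [c]) (n+2) := by
    intro h
    exact hmax c hc ⟨hp.trans (List.prefix_append t [c]), hb', h⟩
  unfold distW at hnd
  push_neg at hnd
  obtain ⟨i, j, hi, hj, hw, hne⟩ := hnd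
  simp only [List.length_append, List.length_singleton] at hi hj
  have hL : n + 1 ≤ t.length := by omega
  have hnew : win (t ++ [c]) (t.length - (n+1)) (n+2) =
      win t (t.length - (n+1)) (n+1) ++ [c] := by
    have := win_snoc_new (t := t) (c := c) (k := n+1) hL
    rwa [show n+1+1 = n+2 by omega] at this
  rcases Nat.lt_or_ge (i + (n+2)) (t.length + 1) with hio | hio
  · rcases Nat.lt_or_ge (j + (n+2)) (t.length + 1) with hjo | hjo
    · exfalso
      rw [win_snoc_old (by omega), win_snoc_old (by omega)] at hw
      exact hne (hd i j (by omega) (by omega) hw)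
    · -- j is the new position
      have hj' : j = t.length - (n+1) := by omega
      refine ⟨i, by omega, ?_⟩
      rw [← win_snoc_old (t := t) (c := c) (i := i) (by omega), hw, hj', hnew]
  · -- i is the new position
    have hi' : i = t.length - (n+1) := by omega
    rcases Nat.lt_or_ge (j + (n+2)) (t.length + 1) with hjo | hjo
    · refine ⟨j, by omega, ?_⟩
      rw [← win_snoc_old (t := t) (c := c) (i := j) (by omega), ← hw, hi', hnew]
    · exfalso
      exact hne (by omega)

lemma len_of_max {n : ℕ} {s t : List ℕ} (hG : Good n s t)
    (hmax : ∀ c < 2, ¬ Good n s (t ++ [c])) : n+2 ≤ t.length := by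
  obtain ⟨i, hi, _⟩ := blocked_of_max hG hmax 0 (by norm_num)
  omega

/-! ### finding a splice point -/

lemma find_splice {n : ℕ} {s t : List ℕ}
    (hsd : distW s n) (hs1 : n+1 ≤ s.length)
    (hG : Good n s t) (hlen : n+2 ≤ t.length)
    (hcl : win t 0 (n+1) = win t (t.length - (n+1)) (n+1))
    {u : List ℕ} (hu : u.length = n+2) (hub : ∀ σ ∈ u, σ < 2) (hun : ¬ memw t u (n+2)) :
    ∃ q c, s.length ≤ q + (n+1) ∧ q + (n+1) ≤ t.length ∧ c < 2 ∧
      ¬ memw t (win t q (n+1) ++ [c]) (n+2) := by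
  obtain ⟨hp, hb, hd⟩ := hG
  have hst : s.length ≤ t.length := hp.length_le
  by_contra hno
  push_neg at hno
  -- every vertex on the extension part has both outgoing edges used
  set InW : List ℕ → Prop :=
    fun y => ∃ q, s.length ≤ q + (n+1) ∧ q + (n+1) ≤ t.length ∧ win t q (n+1) = y with hInW
  have hstep : ∀ y z, InW y → adjS n s y z → InW z := by
    rintro y z ⟨q, hq1, hq2, hqw⟩ ⟨e, ⟨helen, heb, hes⟩, hor⟩
    have hby : ∀ c, c < 2 → memw t (y ++ [c]) (n+2) := by
      intro c hc
      rw [← hqw]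
      exact hno q c hq1 hq2 hc
    have hylen : y.length = n+1 := by rw [← hqw]; exact win_length (by omega)
    rcases hor with ⟨he0, he1⟩ | ⟨he0, he1⟩
    · by_cases hmem : memw t e (n+2)
      · obtain ⟨p, hpb, hpw⟩ := hmem
        have hps : ¬ (p + (n+2) ≤ s.length) := by
          intro hps'
          exact hes ⟨p, hps', by rw [← win_prefix_eq hp hps']; exact hpw⟩
        refine ⟨p+1, by omega, by omega, ?_⟩
        have h1 : (win t p (n+2)).drop 1 = win t (p+1) (n+1) := win_drop1
        rw [hpw] at h1
        have h2 : z = e.drop 1 := by rw [← he1, drop1_eq_win helen]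
        rw [h2]
        exact h1.symm
      · exfalso
        have hlast : e.getD (n+1) 0 < 2 := getD_lt_two heb (by omega)
        apply hmem
        rw [← decomp_last (k := n+1) helen, he0]
        exact hby _ hlast
    · by_cases hmem : memw t e (n+2)
      · obtain ⟨p, hpb, hpw⟩ := hmem
        have hps : ¬ (p + (n+2) ≤ s.length) := by
          intro hps'
          exact hes ⟨p, hps', by rw [← win_prefix_eq hp hps']; exact hpw⟩
        refine ⟨p, by omega, by omega, ?_⟩
        have h2 := congrArg (List.take (n+1)) hpw
        rw [win_take (by omega)] at h2
        rw [h2, ← he0]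
        simp [win]
      · exfalso
        have h0 : e.getD 0 0 < 2 := getD_lt_two heb (by omega)
        have hbal := balance hb hd hlen hcl hylen
          (hby 0 (by norm_num)) (hby 1 (by norm_num)) (e.getD 0 0) h0
        apply hmem
        rw [← decomp_head (k := n+1) helen, he1]
        exact hbal
  have hv1 : InW (win t (s.length - (n+1)) (n+1)) :=
    ⟨s.length - (n+1), by omega, by omega, rfl⟩
  have hreach : ReachS n s (win t (s.length - (n+1)) (n+1)) (win u 0 (n+1)) :=
    reach_all hsd (win_length (by omega)) (win_binary hb)
      (win_length (by omega)) (win_binary hub)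
  have hall : ∀ z, ReachS n s (win t (s.length - (n+1)) (n+1)) z → InW z := by
    intro z hz
    induction hz with
    | refl => exact hv1
    | tail _ h2 ih => exact hstep _ _ ih h2
  have hfin : InW (win u 0 (n+1)) := hall _ hreach
  obtain ⟨q, hq1, hq2, hqw⟩ := hfin
  have hlast : u.getD (n+1) 0 < 2 := getD_lt_two hub (by omega)
  apply hun
  rw [← decomp_last (k := n+1) hu, ← hqw]
  exact hno q _ hq1 hq2 hlast


/-! ### detours -/

def ValidD (n : ℕ) (t w d : List ℕ) : Prop :=
  n+2 ≤ d.length ∧ (∀ σ ∈ d, σ < 2) ∧ distW d (n+2) ∧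
    (∀ u, memw d u (n+2) → ¬ memw t u (n+2)) ∧ win d 0 (n+1) = w

lemma validD_length_le {n : ℕ} {t w d : List ℕ} (h : ValidD n t w d) :
    d.length ≤ 2^(n+2)+n+1 := by
  have := length_le_of_distW (k := n+2) (by omega) h.2.1 h.2.2.1
  have h2 : 2 ≤ 2^(n+2) := by
    calc 2 = 2^1 := (pow_one 2).symm
      _ ≤ 2^(n+2) := Nat.pow_le_pow_right (by norm_num) (by omega)
  omega

lemma detour_max {n : ℕ} {t w : List ℕ} :
    ∀ N (d : List ℕ), ValidD n t w d → 2^(n+2)+n+2 - d.length ≤ N →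
    ∃ d', ValidD n t w d' ∧ ∀ c < 2, ¬ ValidD n t w (d' ++ [c]) := by
  intro N
  induction N with
  | zero =>
    intro d hd hN
    exfalso
    have := validD_length_le hd
    omega
  | succ N ih =>
    intro d hd hN
    by_cases hext : ∃ c, c < 2 ∧ ValidD n t w (d ++ [c])
    · obtain ⟨c, hc, hv⟩ := hext
      apply ih (d ++ [c]) hv
      have h1 := validD_length_le hv
      simp only [List.length_append, List.length_singleton] at h1 ⊢
      omega
    · push_neg at hext
      exact ⟨d, hd, hext⟩

lemma detour_blocked {n : ℕ} {t w d : List ℕ} (hv : ValidD n t w d)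
    (hmax : ∀ c < 2, ¬ ValidD n t w (d ++ [c])) :
    ∀ c < 2, memw t (win d (d.length-(n+1)) (n+1) ++ [c]) (n+2) ∨
             memw d (win d (d.length-(n+1)) (n+1) ++ [c]) (n+2) := by
  intro c hc
  obtain ⟨hl, hb, hd, hdisj, hw⟩ := hv
  have h1 : n+2 ≤ (d++[c]).length := by simp; omega
  have h2 : ∀ σ ∈ d ++ [c], σ < 2 := by
    intro σ hσ
    rcases List.mem_append.1 hσ with h' | h'
    · exact hb σ h'
    · simp at h'; omega
  have h5 : win (d++[c]) 0 (n+1) = w := by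
    rw [win_append_left (by omega)]
    exact hw
  have hnew : win (d ++ [c]) (d.length - (n+1)) (n+2) =
      win d (d.length - (n+1)) (n+1) ++ [c] := by
    have := win_snoc_new (t := d) (c := c) (k := n+1) (by omega)
    rwa [show n+1+1 = n+2 by omega] at this
  by_cases hdist : distW (d++[c]) (n+2)
  · by_cases hdj : ∀ u, memw (d++[c]) u (n+2) → ¬ memw t u (n+2)
    · exact absurd ⟨h1, h2, hdist, hdj, h5⟩ (hmax c hc)
    · push_neg at hdj
      obtain ⟨u, hu1, hu2⟩ := hdj
      left
      obtain ⟨i, hib, hiw⟩ := hu1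
      simp only [List.length_append, List.length_singleton] at hib
      rcases Nat.lt_or_ge (i + (n+2)) (d.length + 1) with hio | hio
      · exfalso
        rw [win_snoc_old (by omega)] at hiw
        exact hdisj u ⟨i, by omega, hiw⟩ hu2
      · have hi' : i = d.length - (n+1) := by omega
        rw [hi', hnew] at hiw
        rw [hiw]
        exact hu2
  · right
    unfold distW at hdist
    push_neg at hdist
    obtain ⟨i, j, hi, hj, hww, hne⟩ := hdist
    simp only [List.length_append, List.length_singleton] at hi hj
    rcases Nat.lt_or_ge (i + (n+2)) (d.length + 1) with hio | hio
    · rcases Nat.lt_or_ge (j + (n+2)) (d.length + 1) with hjo | hjo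
      · exfalso
        rw [win_snoc_old (by omega), win_snoc_old (by omega)] at hww
        exact hne (hd i j (by omega) (by omega) hww)
      · have hj' : j = d.length - (n+1) := by omega
        refine ⟨i, by omega, ?_⟩
        rw [← win_snoc_old (t := d) (c := c) (i := i) (by omega), hww, hj', hnew]
    · have hi' : i = d.length - (n+1) := by omega
      rcases Nat.lt_or_ge (j + (n+2)) (d.length + 1) with hjo | hjo
      · refine ⟨j, by omega, ?_⟩
        rw [← win_snoc_old (t := d) (c := c) (i := j) (by omega), ← hww, hi', hnew]
      · exact absurd (by omega : i = j) hne


/-! ### splicing a detour into t -/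

lemma splice_good {n : ℕ} {s t d : List ℕ} {q : ℕ}
    (hG : Good n s t)
    (hq1 : s.length ≤ q + (n+1)) (hq2 : q + (n+1) ≤ t.length)
    (hdl : n+2 ≤ d.length) (hdb : ∀ σ ∈ d, σ < 2) (hdd : distW d (n+2))
    (hdisj : ∀ u, memw d u (n+2) → ¬ memw t u (n+2))
    (hd0 : win d 0 (n+1) = win t q (n+1))
    (hdL : win d (d.length-(n+1)) (n+1) = win t q (n+1)) :
    Good n s (t.take q ++ (d ++ t.drop (q+(n+1)))) ∧
      (t.take q ++ (d ++ t.drop (q+(n+1)))).length = t.length + (d.length - (n+1)) := by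
  obtain ⟨hp, hb, hd⟩ := hG
  have hlen' : (t.take q ++ (d ++ t.drop (q+(n+1)))).length
      = t.length + (d.length - (n+1)) := by
    simp only [List.length_append, List.length_take, List.length_drop]
    omega
  have hql : (t.take q).length = q := by simp; omega
  -- take identity
  have hdtake : d.take (n+1) = win t q (n+1) := by
    rw [← hd0]; simp [win]
  have htake : (t.take q ++ (d ++ t.drop (q+(n+1)))).take (q+(n+1)) = t.take (q+(n+1)) := by
    rw [List.take_append, hql]
    have e1 : (t.take q).take (q+(n+1)) = t.take q :=
      List.take_of_length_le (by omega)
    have e2 : q + (n+1) - q = n+1 := by omega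
    rw [e1, e2, List.take_append]
    have e3 : n + 1 - d.length = 0 := by omega
    rw [e3, List.take_zero, List.append_nil, hdtake]
    show List.take q t ++ (t.drop q).take (n+1) = List.take (q+(n+1)) t
    exact List.take_add.symm
  -- drop identities
  have hdropq : (t.take q ++ (d ++ t.drop (q+(n+1)))).drop q = d ++ t.drop (q+(n+1)) := by
    rw [List.drop_append, hql, Nat.sub_self, List.drop_zero,
      List.drop_eq_nil_of_le (by omega), List.nil_append]
  have hddrop : d.drop (d.length - (n+1)) = win t q (n+1) := by
    rw [← hdL]
    simp only [win]
    exact (List.take_of_length_le (by simp; omega)).symm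
  have hdropD : (t.take q ++ (d ++ t.drop (q+(n+1)))).drop (q + (d.length - (n+1)))
      = t.drop q := by
    have hddrop' : d.drop (d.length - (n+1)) = (t.drop q).take (n+1) := by
      rw [hddrop]; rfl
    rw [← List.drop_drop (i := d.length - (n+1)) (j := q), hdropq,
      List.drop_append, hddrop',
      Nat.sub_eq_zero_of_le (by omega : d.length - (n+1) ≤ d.length), List.drop_zero,
      ← List.drop_drop (i := n+1) (j := q), List.take_append_drop]
  -- region window formulas
  have hreg1 : ∀ i, i + (n+2) ≤ q + (n+1) →
      win (t.take q ++ (d ++ t.drop (q+(n+1)))) i (n+2) = win t i (n+2) := by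
    intro i hi
    rw [← win_of_take (t := t.take q ++ (d ++ t.drop (q+(n+1)))) (N := q+(n+1)) hi, htake,
      win_of_take hi]
  have hreg2 : ∀ j, j + (n+2) ≤ d.length →
      win (t.take q ++ (d ++ t.drop (q+(n+1)))) (q + j) (n+2) = win d j (n+2) := by
    intro j hj
    rw [← win_of_drop (a := q), hdropq, win_append_left hj]
  have hreg3 : ∀ i, q + (d.length - (n+1)) ≤ i →
      win (t.take q ++ (d ++ t.drop (q+(n+1)))) i (n+2)
        = win t (i - (d.length - (n+1))) (n+2) := by
    intro i hi
    rw [show i = (q + (d.length - (n+1))) + (i - (q + (d.length - (n+1)))) by omega,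
      ← win_of_drop, hdropD, win_of_drop]
    congr 1
    omega
  refine ⟨⟨?_, ?_, ?_⟩, hlen'⟩
  · -- prefix
    have hspre : s <+: t.take (q+(n+1)) := by
      rw [List.prefix_iff_eq_take] at hp ⊢
      rw [List.take_take, Nat.min_eq_left (by omega)]
      exact hp
    calc s <+: t.take (q+(n+1)) := hspre
      _ = (t.take q ++ (d ++ t.drop (q+(n+1)))).take (q+(n+1)) := htake.symm
      _ <+: t.take q ++ (d ++ t.drop (q+(n+1))) := List.take_prefix _ _
  · -- binary
    intro σ hσ
    rcases List.mem_append.1 hσ with h' | h'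
    · exact hb σ (List.mem_of_mem_take h')
    rcases List.mem_append.1 h' with h'' | h''
    · exact hdb σ h''
    · exact hb σ (List.mem_of_mem_drop h'')
  · -- distinct windows
    intro i j hi hj hww
    rw [hlen'] at hi hj
    have hcov : ∀ x, x + (n+2) ≤ t.length + (d.length - (n+1)) →
        (x + (n+2) ≤ q + (n+1)) ∨ (q ≤ x ∧ x + (n+2) ≤ q + d.length) ∨
          (q + (d.length - (n+1)) ≤ x) := by
      intro x hx
      omega
    have hmemd : ∀ x, q ≤ x → x + (n+2) ≤ q + d.length →
        win (t.take q ++ (d ++ t.drop (q+(n+1)))) x (n+2) = win d (x - q) (n+2) := by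
      intro x h1 h2
      have hx := hreg2 (x - q) (by omega)
      rw [show q + (x - q) = x by omega] at hx
      exact hx
    rcases hcov i hi with hi1 | ⟨hi2a, hi2b⟩ | hi3 <;>
      rcases hcov j hj with hj1 | ⟨hj2a, hj2b⟩ | hj3
    · -- 1,1
      rw [hreg1 i hi1, hreg1 j hj1] at hww
      exact hd i j (by omega) (by omega) hww
    · -- 1,2
      rw [hreg1 i hi1, hmemd j hj2a hj2b] at hww
      exact absurd ⟨i, by omega, hww⟩ (hdisj _ ⟨j - q, by omega, rfl⟩)
    · -- 1,3
      rw [hreg1 i hi1, hreg3 j hj3] at hww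
      have := hd i (j - (d.length - (n+1))) (by omega) (by omega) hww
      omega
    · -- 2,1
      rw [hmemd i hi2a hi2b, hreg1 j hj1] at hww
      exact absurd ⟨j, by omega, hww.symm⟩ (hdisj _ ⟨i - q, by omega, rfl⟩)
    · -- 2,2
      rw [hmemd i hi2a hi2b, hmemd j hj2a hj2b] at hww
      have := hdd (i - q) (j - q) (by omega) (by omega) hww
      omega
    · -- 2,3
      rw [hmemd i hi2a hi2b, hreg3 j hj3] at hww
      exact absurd ⟨j - (d.length - (n+1)), by omega, hww.symm⟩
        (hdisj _ ⟨i - q, by omega, rfl⟩)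
    · -- 3,1
      rw [hreg3 i hi3, hreg1 j hj1] at hww
      have := hd (i - (d.length - (n+1))) j (by omega) (by omega) hww
      omega
    · -- 3,2
      rw [hreg3 i hi3, hmemd j hj2a hj2b] at hww
      exact absurd ⟨i - (d.length - (n+1)), by omega, hww⟩
        (hdisj _ ⟨j - q, by omega, rfl⟩)
    · -- 3,3
      rw [hreg3 i hi3, hreg3 j hj3] at hww
      have := hd (i - (d.length - (n+1))) (j - (d.length - (n+1)))
        (by omega) (by omega) hww
      omega


/-! ### the main growth induction -/

lemma grow {n : ℕ} {s : List ℕ} (hsd : distW s n) (hs1 : n+1 ≤ s.length) :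
    ∀ N (t : List ℕ), Good n s t → s.length ≤ t.length →
      2^(n+2)+n+2 - t.length ≤ N →
      ∃ tf, Good n s tf ∧ tf.length = 2^(n+2)+n+1 := by
  have hpow : 2 ≤ 2^(n+2) := by
    calc 2 = 2^1 := (pow_one 2).symm
      _ ≤ 2^(n+2) := Nat.pow_le_pow_right (by norm_num) (by omega)
  intro N
  induction N with
  | zero =>
    intro t hG hst hN
    exfalso
    have := length_le_of_distW (k := n+2) (by omega) hG.2.1 hG.2.2
    omega
  | succ N ih =>
    intro t hG hst hN
    have hbound := length_le_of_distW (k := n+2) (by omega) hG.2.1 hG.2.2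
    by_cases hfull : t.length = 2^(n+2)+n+1
    · exact ⟨t, hG, hfull⟩
    by_cases hext : ∃ c, c < 2 ∧ Good n s (t ++ [c])
    · obtain ⟨c, hc, hGc⟩ := hext
      apply ih (t ++ [c]) hGc (by simp; omega)
      simp only [List.length_append, List.length_singleton]
      omega
    · push_neg at hext
      have hmax : ∀ c < 2, ¬ Good n s (t ++ [c]) := hext
      have hlen : n+2 ≤ t.length := len_of_max hG hmax
      have hbl := blocked_of_max hG hmax
      have hcl : win t 0 (n+1) = win t (t.length-(n+1)) (n+1) :=
        closed_of_blocked hG.2.1 hG.2.2 hbl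
      have hlt : t.length < 2^(n+2)+(n+2)-1 := by omega
      obtain ⟨u, hu, hub, hun⟩ := exists_unused (k := n+2) (by omega) hG.2.1 hG.2.2 hlt
      obtain ⟨q, c, hq1, hq2, hc, hqc⟩ := find_splice hsd hs1 hG hlen hcl hu hub hun
      have hwlen : (win t q (n+1)).length = n+1 := win_length (by omega)
      have hd0 : ValidD n t (win t q (n+1)) (win t q (n+1) ++ [c]) := by
        refine ⟨by simp [hwlen], ?_, ?_, ?_, ?_⟩
        · intro σ hσ
          rcases List.mem_append.1 hσ with h' | h'
          · exact win_binary hG.2.1 σ h'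
          · simp at h'; omega
        · intro i j hi hj _
          simp only [List.length_append, List.length_singleton, hwlen] at hi hj
          omega
        · rintro u' ⟨i, hib, hiw⟩ hmem
          simp only [List.length_append, List.length_singleton, hwlen] at hib
          have hi0 : i = 0 := by omega
          rw [hi0, win_self (by simp [hwlen])] at hiw
          rw [← hiw] at hmem
          exact hqc hmem
        · show win (win t q (n+1) ++ [c]) 0 (n+1) = win t q (n+1)
          simp only [win, List.drop_zero]
          exact List.take_left' hwlen
      obtain ⟨d, hdv, hdmax⟩ := detour_max (2^(n+2)+n+2) (win t q (n+1) ++ [c]) hd0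
        (by omega)
      have hdbl := detour_blocked hdv hdmax
      have hdcl : win d 0 (n+1) = win d (d.length-(n+1)) (n+1) :=
        detour_closed hG.2.1 hG.2.2 hlen hcl hdv.2.1 hdv.2.2.1 hdv.1 hdv.2.2.2.1 hdbl
      have hdL : win d (d.length-(n+1)) (n+1) = win t q (n+1) := by
        rw [← hdcl]
        exact hdv.2.2.2.2
      obtain ⟨hG', hlen'⟩ := splice_good hG hq1 hq2 hdv.1 hdv.2.1 hdv.2.2.1
        hdv.2.2.2.1 hdv.2.2.2.2 hdL
      have hdlen := hdv.1
      apply ih _ hG' (by omega)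
      omega

end DBExt

/-- Every binary De Bruijn sequence of order `n ≥ 1` can be extended to a binary De Bruijn
sequence of order `n+2`: if `s` is a string of length `2^n + n - 1` over `{0,1}` whose
windows of length `n` are pairwise distinct, then there is a string `t` of length
`2^(n+2) + n + 1` over `{0,1}` whose windows of length `n+2` are pairwise distinct and
which has `s` as a prefix. -/
theorem deBruijn_binary_extend_two (n : ℕ) (hn : 1 ≤ n)
    (s : List ℕ) (hslen : s.length = 2 ^ n + n - 1) (hsk : ∀ σ ∈ s, σ < 2)
    (hs : ∀ i j, i + n ≤ s.length → j + n ≤ s.length →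
      (s.drop i).take n = (s.drop j).take n → i = j) :
    ∃ t : List ℕ, t.length = 2 ^ (n + 2) + n + 1 ∧ (∀ σ ∈ t, σ < 2) ∧
      (∀ i j, i + (n + 2) ≤ t.length → j + (n + 2) ≤ t.length →
        (t.drop i).take (n + 2) = (t.drop j).take (n + 2) → i = j) ∧
      s <+: t := by
  have hsd : DBExt.distW s n := hs
  have hpn : 2 ≤ 2^n := by
    calc 2 = 2^1 := (pow_one 2).symm
      _ ≤ 2^n := Nat.pow_le_pow_right (by norm_num) hn
  have hs1 : n+1 ≤ s.length := by omega
  have hGs : DBExt.Good n s s :=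
    ⟨List.prefix_refl s, hsk, by
      have := DBExt.distW_mono (j := 2) hsd
      exact this⟩
  obtain ⟨tf, hGf, hlf⟩ := DBExt.grow hsd hs1 (2^(n+2)+n+2) s hGs le_rfl
    (Nat.sub_le _ _)
  exact ⟨tf, hlf, hGf.2.1, hGf.2.2, hGf.1⟩
end

section
/- Let (w_i)_{i=0}^{k^n-1} be the (k,n)-prefer-max cycle with k > 1, n ≥ 1, and let i_0 = min{ i : the symbol k-1 does not occur in w_i }. Then i_0 = k^n - (k-1)^n. -/
section PreferMaxHelpers

variable {k n : ℕ}

lemma pm_aux_succ (i : ℕ) : preferMaxAux k n (i+1) =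
    ((preferMax k n i).tail ++
      [Nat.findGreatest (fun τ => ((preferMax k n i).tail ++ [τ]) ∉ preferMaxAux k n i) (k-1)])
      :: preferMaxAux k n i := rfl

lemma pm_succ (i : ℕ) : preferMax k n (i+1) =
    (preferMax k n i).tail ++
      [Nat.findGreatest (fun τ => ((preferMax k n i).tail ++ [τ]) ∉ preferMaxAux k n i) (k-1)] := rfl

lemma pm_zero : preferMax k n 0 = List.replicate (n-1) 0 ++ [k-1] := rfl

lemma pm_mem_aux {u : List ℕ} {j : ℕ} :
    u ∈ preferMaxAux k n j ↔ ∃ m ≤ j, preferMax k n m = u := by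
  induction j with
  | zero =>
    constructor
    · intro h
      refine ⟨0, le_refl 0, ?_⟩
      simp only [preferMaxAux, List.mem_singleton] at h
      rw [h]; rfl
    · rintro ⟨m, hm, rfl⟩
      interval_cases m
      simp [preferMaxAux, preferMax]
  | succ j ih =>
    rw [pm_aux_succ, List.mem_cons]
    constructor
    · rintro (h | h)
      · exact ⟨j+1, le_refl _, by rw [pm_succ, h]⟩
      · obtain ⟨m, hm, hu⟩ := ih.mp h
        exact ⟨m, Nat.le_succ_of_le hm, hu⟩
    · rintro ⟨m, hm, rfl⟩
      rcases Nat.eq_or_lt_of_le hm with rfl | hlt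
      · left; exact (pm_succ j).symm ▸ rfl
      · right; exact ih.mpr ⟨m, Nat.lt_succ_iff.mp hlt, rfl⟩

lemma pm_mem_aux_of_le {m j : ℕ} (h : m ≤ j) : preferMax k n m ∈ preferMaxAux k n j :=
  pm_mem_aux.mpr ⟨m, h, rfl⟩

lemma pm_length (hn : 1 ≤ n) (i : ℕ) : (preferMax k n i).length = n := by
  induction i with
  | zero => simp [pm_zero]; omega
  | succ i ih => rw [pm_succ]; simp [List.length_tail, ih]; omega

lemma pm_ne_nil (hn : 1 ≤ n) (i : ℕ) : preferMax k n i ≠ [] := by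
  intro h
  have := pm_length (k := k) hn i
  rw [h] at this
  simp at this; omega

lemma pm_cons (hn : 1 ≤ n) (i : ℕ) :
    (preferMax k n i).headI :: (preferMax k n i).tail = preferMax k n i := by
  cases h : preferMax k n i with
  | nil => exact absurd h (pm_ne_nil hn i)
  | cons a l => simp

lemma pm_lt (hk : 1 ≤ k) (i : ℕ) : ∀ x ∈ preferMax k n i, x < k := by
  induction i with
  | zero =>
    intro x hx
    rw [pm_zero] at hx
    rcases List.mem_append.mp hx with h | h
    · have := List.eq_of_mem_replicate h; omega
    · simp at h; omega
  | succ i ih =>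
    intro x hx
    rw [pm_succ] at hx
    rcases List.mem_append.mp hx with h | h
    · exact ih x (List.mem_of_mem_tail h)
    · simp at h; have := Nat.findGreatest_le (P := fun τ => ((preferMax k n i).tail ++ [τ]) ∉ preferMaxAux k n i) (k-1)
      omega

lemma pm_index {j a b : ℕ} (hnd : (preferMaxAux k n j).Nodup)
    (ha : a ≤ j) (hb : b ≤ j) (h : preferMax k n a = preferMax k n b) : a = b := by
  induction j with
  | zero => omega
  | succ j ih =>
    rw [pm_aux_succ, List.nodup_cons] at hnd
    rcases Nat.eq_or_lt_of_le ha with rfl | ha' <;> rcases Nat.eq_or_lt_of_le hb with rfl | hb'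
    · rfl
    · exfalso; apply hnd.1; rw [← pm_succ, h]
      exact pm_mem_aux_of_le (Nat.lt_succ_iff.mp hb')
    · exfalso; apply hnd.1; rw [← pm_succ, ← h]
      exact pm_mem_aux_of_le (Nat.lt_succ_iff.mp ha')
    · exact ih hnd.2 (Nat.lt_succ_iff.mp ha') (Nat.lt_succ_iff.mp hb')

/-- Greedy maximality: if `v ++ [c]` is a window and `c ≤ c' ≤ k-1`, then `v ++ [c']`
has already appeared. -/
lemma pm_G2 {j : ℕ} {v : List ℕ} {c c' : ℕ} (h : v ++ [c] ∈ preferMaxAux k n j)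
    (hcc : c ≤ c') (hc' : c' ≤ k-1) : v ++ [c'] ∈ preferMaxAux k n j := by
  obtain ⟨m, hm, hw⟩ := pm_mem_aux.mp h
  cases m with
  | zero =>
    rw [pm_zero] at hw
    obtain ⟨hv, hc⟩ := List.append_inj' hw (by simp)
    simp only [List.cons.injEq] at hc
    have : c' = c := by omega
    rw [this]
    exact h
  | succ m' =>
    rw [pm_succ] at hw
    obtain ⟨hv, hc⟩ := List.append_inj' hw (by simp)
    simp only [List.cons.injEq] at hc
    rcases Nat.eq_or_lt_of_le hcc with rfl | hlt
    · exact h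
    · have hng := Nat.findGreatest_is_greatest (P := fun τ => ((preferMax k n m').tail ++ [τ]) ∉ preferMaxAux k n m') (n := k-1) (by omega) hc'
      rw [not_not] at hng
      rw [hv] at hng
      obtain ⟨m'', hm'', hw''⟩ := pm_mem_aux.mp hng
      exact pm_mem_aux.mpr ⟨m'', by omega, hw''⟩

/-- While all windows so far contain `k-1`, the next window is fresh. -/
lemma pm_fresh (hk : 1 < k) (hn : 1 ≤ n) {j : ℕ} (hnd : (preferMaxAux k n j).Nodup)
    (hlayer : ∀ m ≤ j, (k-1) ∈ preferMax k n m) :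
    preferMax k n (j+1) ∉ preferMaxAux k n j := by
  intro hcon
  set x := (preferMax k n j).tail with hxdef
  set P : ℕ → Prop := fun τ => (x ++ [τ]) ∉ preferMaxAux k n j with hPdef
  have hcon' : ¬ P (Nat.findGreatest P (k-1)) := by
    rw [pm_succ] at hcon
    simpa [hPdef] using hcon
  have hall : ∀ c < k, x ++ [c] ∈ preferMaxAux k n j := by
    intro c hc
    by_contra hnc
    exact hcon' (Nat.findGreatest_spec (m := c) (by omega) hnc)
  by_cases hx : (k-1) ∈ x
  · -- case A: the predecessor-counting argument
    have hR : ∀ c < k, ∃ h, ∃ m, m < j ∧ preferMax k n m = h :: x ∧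
        preferMax k n (m+1) = x ++ [c] := by
      intro c hc
      obtain ⟨m, hm, hw⟩ := pm_mem_aux.mp (hall c hc)
      cases m with
      | zero =>
        exfalso
        rw [pm_zero] at hw
        obtain ⟨hv, -⟩ := List.append_inj' hw.symm (by simp)
        rw [hv] at hx
        have := List.eq_of_mem_replicate hx
        omega
      | succ m' =>
        have hw' := hw
        rw [pm_succ] at hw
        obtain ⟨hv, -⟩ := List.append_inj' hw (by simp)
        refine ⟨(preferMax k n m').headI, m', by omega, ?_, hw'⟩
        rw [← hv]
        exact (pm_cons hn m').symm
    classical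
    set f : ℕ → ℕ := fun c => if hc : c < k then (hR c hc).choose else 0 with hfdef
    have hf : ∀ c < k, ∃ m, m < j ∧ preferMax k n m = f c :: x ∧
        preferMax k n (m+1) = x ++ [c] := by
      intro c hc
      simp only [hfdef, dif_pos hc]
      exact (hR c hc).choose_spec
    set T : Finset ℕ := (Finset.range k).filter
      (fun h => ∃ m, m < j ∧ preferMax k n m = h :: x) with hTdef
    have hmaps : ∀ c ∈ Finset.range k, f c ∈ T := by
      intro c hc
      rw [Finset.mem_range] at hc
      obtain ⟨m, hm, hwm, -⟩ := hf c hc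
      rw [Finset.mem_filter, Finset.mem_range]
      constructor
      · have : f c ∈ preferMax k n m := by rw [hwm]; exact List.mem_cons_self
        exact pm_lt (by omega) m _ this
      · exact ⟨m, hm, hwm⟩
    have hinj : Set.InjOn f (Finset.range k) := by
      intro c₁ h₁ c₂ h₂ hfe
      rw [Finset.coe_range, Set.mem_Iio] at h₁ h₂
      obtain ⟨m₁, hm₁, hw₁, hs₁⟩ := hf c₁ h₁
      obtain ⟨m₂, hm₂, hw₂, hs₂⟩ := hf c₂ h₂
      have : m₁ = m₂ := by
        apply pm_index hnd (by omega) (by omega)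
        rw [hw₁, hw₂, hfe]
      rw [this] at hs₁
      have := hs₁.symm.trans hs₂
      have := List.append_cancel_left this
      simpa using this
    have hcard : (Finset.range k).card ≤ T.card :=
      Finset.card_le_card_of_injOn f hmaps hinj
    have hTsub : T ⊆ Finset.range k := Finset.filter_subset _ _
    have hTeq : T = Finset.range k :=
      (Finset.eq_of_subset_of_card_le hTsub (by simpa using hcard)).symm ▸ rfl
    -- the head of w_j is in T
    have hhead : (preferMax k n j).headI ∈ Finset.range k := by
      rw [Finset.mem_range]
      apply pm_lt (by omega) j
      exact (pm_cons hn j) ▸ List.mem_cons_self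
    rw [← hTeq, hTdef, Finset.mem_filter] at hhead
    obtain ⟨-, m, hm, hwm⟩ := hhead
    have : m = j := by
      apply pm_index hnd (by omega) (le_refl j)
      rw [hwm, hxdef, pm_cons hn j]
    omega
  · -- case B: x is free of k-1, but then x ++ [0] would lack k-1
    have h0 : x ++ [0] ∈ preferMaxAux k n j := hall 0 (by omega)
    obtain ⟨m, hm, hw⟩ := pm_mem_aux.mp h0
    have := hlayer m hm
    rw [hw] at this
    rcases List.mem_append.mp this with h | h
    · exact hx h
    · simp at h; omega

lemma pm_nodup (hk : 1 < k) (hn : 1 ≤ n) :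
    ∀ j : ℕ, (∀ m < j, (k-1) ∈ preferMax k n m) → (preferMaxAux k n j).Nodup := by
  intro j
  induction j with
  | zero => intro _; simp [preferMaxAux]
  | succ j ih =>
    intro hlayer
    rw [pm_aux_succ, List.nodup_cons]
    have hnd := ih (fun m hm => hlayer m (by omega))
    refine ⟨?_, hnd⟩
    rw [← pm_succ]
    exact pm_fresh hk hn hnd (fun m hm => hlayer m (by omega))

/-- Number of extensions of `v` present in `L`. -/
def pmE (k : ℕ) (L : List (List ℕ)) (v : List ℕ) : ℕ :=
  ((Finset.range k).filter (fun c => v ++ [c] ∈ L)).card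

/-- Number of predecessors of `v` present in `L`. -/
def pmP (k : ℕ) (L : List (List ℕ)) (v : List ℕ) : ℕ :=
  ((Finset.range k).filter (fun σ => σ :: v ∈ L)).card

lemma pm_bal_inv (hk : 1 < k) (hn : 1 ≤ n) :
    ∀ j : ℕ, (preferMaxAux k n j).Nodup → ∀ v : List ℕ,
      pmE k (preferMaxAux k n j) v + (if v = (preferMax k n j).tail then 1 else 0)
        = pmP k (preferMaxAux k n j) v + (if v = List.replicate (n-1) 0 then 1 else 0) := by
  intro j
  induction j with
  | zero =>
    intro _ v
    have hE : pmE k (preferMaxAux k n 0) v = if v = List.replicate (n-1) 0 then 1 else 0 := by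
      unfold pmE
      split_ifs with hv
      · subst hv
        have : (Finset.range k).filter
            (fun c => List.replicate (n-1) 0 ++ [c] ∈ preferMaxAux k n 0) = {k-1} := by
          ext c
          simp only [Finset.mem_filter, Finset.mem_range, Finset.mem_singleton]
          constructor
          · rintro ⟨hc, hm⟩
            simp only [preferMaxAux, List.mem_singleton] at hm
            have := List.append_cancel_left hm
            simpa using this
          · rintro rfl
            refine ⟨by omega, ?_⟩
            simp [preferMaxAux]
        rw [this]; simp
      · convert Finset.card_empty
        rw [Finset.filter_eq_empty_iff]
        intro c _ hm
        simp only [preferMaxAux, List.mem_singleton] at hm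
        exact hv (List.append_inj' hm (by simp)).1
    have hP : pmP k (preferMaxAux k n 0) v = if v = (preferMax k n 0).tail then 1 else 0 := by
      unfold pmP
      split_ifs with hv
      · subst hv
        have : (Finset.range k).filter
            (fun σ => σ :: (preferMax k n 0).tail ∈ preferMaxAux k n 0)
            = {(preferMax k n 0).headI} := by
          ext σ
          simp only [Finset.mem_filter, Finset.mem_range, Finset.mem_singleton]
          constructor
          · rintro ⟨hσ, hm⟩
            simp only [preferMaxAux, List.mem_singleton] at hm
            have h0 : preferMax k n 0 = List.replicate (n-1) 0 ++ [k-1] := pm_zero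
            rw [← h0] at hm
            rw [← pm_cons hn 0] at hm
            exact (List.cons.injEq _ _ _ _ ▸ hm).1
          · rintro rfl
            refine ⟨?_, ?_⟩
            · apply pm_lt (by omega) 0
              exact (pm_cons hn 0) ▸ List.mem_cons_self
            · rw [pm_cons hn 0]
              exact pm_mem_aux_of_le (le_refl 0)
        rw [this]; simp
      · convert Finset.card_empty
        rw [Finset.filter_eq_empty_iff]
        intro σ _ hm
        simp only [preferMaxAux, List.mem_singleton] at hm
        apply hv
        have h0 : preferMax k n 0 = List.replicate (n-1) 0 ++ [k-1] := pm_zero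
        rw [← h0, ← pm_cons hn 0] at hm
        exact (List.cons.injEq _ _ _ _ ▸ hm).2
    rw [hE, hP]
    omega
  | succ j ih =>
    intro hnd v
    rw [pm_aux_succ, List.nodup_cons] at hnd
    obtain ⟨hfresh, hnd'⟩ := hnd
    have hihv := ih hnd' v
    set τ : ℕ := Nat.findGreatest
      (fun τ => ((preferMax k n j).tail ++ [τ]) ∉ preferMaxAux k n j) (k-1) with hτdef
    have hτk : τ < k := by
      have := Nat.findGreatest_le
        (P := fun τ => ((preferMax k n j).tail ++ [τ]) ∉ preferMaxAux k n j) (k-1)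
      omega
    have hwsucc : preferMax k n (j+1) = (preferMax k n j).tail ++ [τ] := pm_succ j
    have hfresh' : (preferMax k n j).tail ++ [τ] ∉ preferMaxAux k n j := hfresh
    -- E step
    have hE : pmE k (preferMaxAux k n (j+1)) v
        = pmE k (preferMaxAux k n j) v + (if v = (preferMax k n j).tail then 1 else 0) := by
      unfold pmE
      rw [pm_aux_succ]
      split_ifs with hv
      · subst hv
        have hset : (Finset.range k).filter
            (fun c => (preferMax k n j).tail ++ [c] ∈
              (((preferMax k n j).tail ++ [τ]) :: preferMaxAux k n j))
            = insert τ ((Finset.range k).filter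
              (fun c => (preferMax k n j).tail ++ [c] ∈ preferMaxAux k n j)) := by
          ext c
          simp only [Finset.mem_filter, Finset.mem_range, Finset.mem_insert, List.mem_cons]
          constructor
          · rintro ⟨hc, hm | hm⟩
            · left; have := List.append_cancel_left hm; simpa using this
            · right; exact ⟨hc, hm⟩
          · rintro (rfl | ⟨hc, hm⟩)
            · exact ⟨hτk, Or.inl rfl⟩
            · exact ⟨hc, Or.inr hm⟩
        rw [hset, Finset.card_insert_of_notMem]
        simp only [Finset.mem_filter]
        rintro ⟨-, hm⟩
        exact hfresh' hm
      · have hfe : (Finset.range k).filter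
            (fun c => v ++ [c] ∈ (((preferMax k n j).tail ++ [τ]) :: preferMaxAux k n j))
            = (Finset.range k).filter (fun c => v ++ [c] ∈ preferMaxAux k n j) := by
          apply Finset.filter_congr
          intro c _
          simp only [List.mem_cons]
          constructor
          · rintro (hm | hm)
            · exfalso; exact hv (List.append_inj' hm (by simp)).1
            · exact hm
          · exact Or.inr
        rw [hfe]; omega
    -- P step
    have hne : preferMax k n (j+1) ≠ [] := pm_ne_nil hn (j+1)
    have hP : pmP k (preferMaxAux k n (j+1)) v
        = pmP k (preferMaxAux k n j) v + (if v = (preferMax k n (j+1)).tail then 1 else 0) := by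
      unfold pmP
      rw [pm_aux_succ, ← pm_succ]
      split_ifs with hv
      · subst hv
        have hset : (Finset.range k).filter
            (fun σ => σ :: (preferMax k n (j+1)).tail ∈
              (preferMax k n (j+1) :: preferMaxAux k n j))
            = insert (preferMax k n (j+1)).headI ((Finset.range k).filter
              (fun σ => σ :: (preferMax k n (j+1)).tail ∈ preferMaxAux k n j)) := by
          ext σ
          simp only [Finset.mem_filter, Finset.mem_range, Finset.mem_insert, List.mem_cons]
          constructor
          · rintro ⟨hσ, hm | hm⟩
            · left
              rw [← pm_cons hn (j+1)] at hm
              exact (List.cons.injEq _ _ _ _ ▸ hm).1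
            · right; exact ⟨hσ, hm⟩
          · rintro (rfl | ⟨hσ, hm⟩)
            · refine ⟨?_, Or.inl ?_⟩
              · apply pm_lt (by omega) (j+1)
                exact (pm_cons hn (j+1)) ▸ List.mem_cons_self
              · rw [pm_cons hn (j+1)]
            · exact ⟨hσ, Or.inr hm⟩
        rw [hset, Finset.card_insert_of_notMem]
        simp only [Finset.mem_filter]
        rintro ⟨-, hm⟩
        rw [pm_cons hn (j+1)] at hm
        rw [hwsucc] at hm
        exact hfresh' hm
      · have hfe : (Finset.range k).filter
            (fun σ => σ :: v ∈ (preferMax k n (j+1) :: preferMaxAux k n j))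
            = (Finset.range k).filter (fun σ => σ :: v ∈ preferMaxAux k n j) := by
          apply Finset.filter_congr
          intro σ _
          simp only [List.mem_cons]
          constructor
          · rintro (hm | hm)
            · exfalso
              apply hv
              rw [← pm_cons hn (j+1)] at hm
              exact (List.cons.injEq _ _ _ _ ▸ hm).2
            · exact hm
          · exact Or.inr
        rw [hfe]; omega
    rw [hE, hP]
    have htail : (preferMax k n (j+1)).tail = (preferMax k n j).tail.tail ++ [τ] ∨
        (preferMax k n (j+1)).tail = [] ∨ True := Or.inr (Or.inr trivial)
    -- combine with IH
    split_ifs at hihv ⊢ <;> omega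

/-- Finset of all words of length `m` over alphabet `{0,…,k-1}`. -/
def pmWords (k : ℕ) : ℕ → Finset (List ℕ)
  | 0 => {[]}
  | m + 1 => ((Finset.range k) ×ˢ pmWords k m).image fun p => p.1 :: p.2

lemma pm_mem_words {k m : ℕ} {u : List ℕ} :
    u ∈ pmWords k m ↔ u.length = m ∧ ∀ x ∈ u, x < k := by
  induction m generalizing u with
  | zero => cases u <;> simp [pmWords]
  | succ m ih =>
    cases u with
    | nil => simp [pmWords]
    | cons a l =>
      simp only [pmWords, Finset.mem_image, Finset.mem_product, Finset.mem_range, Prod.exists,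
        List.length_cons, List.mem_cons]
      constructor
      · rintro ⟨x, y, ⟨hx, hy⟩, heq⟩
        obtain ⟨rfl, rfl⟩ : x = a ∧ y = l := by
          simpa [List.cons.injEq] using heq
        obtain ⟨hl, hall⟩ := ih.mp hy
        exact ⟨by omega, fun z hz => by rcases hz with rfl | hz; exact hx; exact hall z hz⟩
      · rintro ⟨hlen, hall⟩
        exact ⟨a, l, ⟨hall a (Or.inl rfl), ih.mpr ⟨by omega, fun z hz => hall z (Or.inr hz)⟩⟩, rfl⟩

lemma pm_card_words (k m : ℕ) : (pmWords k m).card = k ^ m := by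
  induction m with
  | zero => simp [pmWords]
  | succ m ih =>
    rw [pmWords, Finset.card_image_of_injOn, Finset.card_product, Finset.card_range, ih,
      pow_succ, mul_comm]
    intro p _ q _ h
    simp only [List.cons.injEq] at h
    exact Prod.ext h.1 h.2

/-- takeWhile over an append when the left part contains a failing element -/
lemma pm_takeWhile_append {a : ℕ} {r : List ℕ} : ∀ {l : List ℕ}, a ∈ l →
    (l ++ r).takeWhile (fun x => x != a) = l.takeWhile (fun x => x != a) := by
  intro l
  induction l with
  | nil => intro h; simp at h
  | cons c l' ih =>
    intro h
    by_cases hc : c = a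
    · subst hc; simp [List.takeWhile_cons]
    · have hc' : (c != a) = true := by simpa using hc
      rcases List.mem_cons.mp h with heq | h
      · exact absurd heq.symm hc
      · simp only [List.cons_append, List.takeWhile_cons, hc', if_true]
        rw [ih h]

lemma pm_takeWhile_lt {a : ℕ} : ∀ {l : List ℕ}, a ∈ l →
    (l.takeWhile (fun x => x != a)).length < l.length := by
  intro l
  induction l with
  | nil => intro h; simp at h
  | cons c l' ih =>
    intro h
    by_cases hc : c = a
    · subst hc; simp [List.takeWhile_cons]
    · have hc' : (c != a) = true := by simpa using hc
      rcases List.mem_cons.mp h with heq | h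
      · exact absurd heq.symm hc
      · simp only [List.takeWhile_cons, hc', if_true, List.length_cons]
        exact Nat.succ_lt_succ (ih h)

lemma pm_aux_length (j : ℕ) : (preferMaxAux k n j).length = j + 1 := by
  induction j with
  | zero => rfl
  | succ j ih => rw [pm_aux_succ, List.length_cons, ih]

end PreferMaxHelpers

/-- Let `i₀ = min { i : the symbol k-1 does not occur in wᵢ }` for the
`(k,n)`-prefer-max cycle with `k > 1`, `n ≥ 1`.  Then `i₀ = k^n - (k-1)^n`. -/
theorem preferMax_first_layer_length (k n i₀ : ℕ) (hk : 1 < k) (hn : 1 ≤ n)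
    (hi₀ : (k - 1) ∉ preferMax k n i₀)
    (hmin : ∀ j < i₀, (k - 1) ∈ preferMax k n j) :
    i₀ = k ^ n - (k - 1) ^ n := by
  classical
  have hi₀pos : 1 ≤ i₀ := by
    by_contra h
    have h0 : i₀ = 0 := by omega
    subst h0
    exact hi₀ (by rw [pm_zero]; simp)
  have hAnodup : (preferMaxAux k n (i₀ - 1)).Nodup :=
    pm_nodup hk hn _ (fun m hm => hmin m (by omega))
  have hAW : ∀ u ∈ preferMaxAux k n (i₀ - 1),
      u.length = n ∧ (∀ x ∈ u, x < k) ∧ (k-1) ∈ u := by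
    intro u hu
    obtain ⟨m, hm, hu'⟩ := pm_mem_aux.mp hu
    subst hu'
    exact ⟨pm_length hn m, pm_lt (by omega) m, hmin m (by omega)⟩
  have hsucc : i₀ - 1 + 1 = i₀ := by omega
  -- the exit analysis: the tail of the last layer window is 0^(n-1)
  have hwi := pm_succ (k := k) (n := n) (i₀ - 1)
  rw [hsucc] at hwi
  have hxfree : (k-1) ∉ (preferMax k n (i₀-1)).tail := by
    intro hx
    exact hi₀ (hwi ▸ List.mem_append.mpr (Or.inl hx))
  have hfg : Nat.findGreatest
      (fun τ => ((preferMax k n (i₀-1)).tail ++ [τ]) ∉ preferMaxAux k n (i₀-1)) (k-1) ≠ k-1 := by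
    intro he
    apply hi₀
    rw [hwi, he]
    simp
  have hPk : (preferMax k n (i₀-1)).tail ++ [k-1] ∈ preferMaxAux k n (i₀-1) := by
    by_contra hP
    exact hfg (le_antisymm (Nat.findGreatest_le _) (Nat.le_findGreatest (le_refl _) hP))
  have htail : (preferMax k n (i₀-1)).tail = List.replicate (n-1) 0 := by
    obtain ⟨m, hm, hw⟩ := pm_mem_aux.mp hPk
    cases m with
    | zero =>
      rw [pm_zero] at hw
      exact ((List.append_inj' hw (by simp)).1).symm
    | succ m' =>
      exfalso
      rw [pm_succ] at hw
      obtain ⟨hv, -⟩ := List.append_inj' hw (by simp)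
      have h1 : preferMax k n m' = (k-1) :: (preferMax k n (i₀-1)).tail := by
        have hdec : (preferMax k n m').headI :: (preferMax k n (i₀-1)).tail
            = preferMax k n m' := by rw [← hv]; exact pm_cons hn m'
        have hk1 : (k-1) ∈ preferMax k n m' := hmin m' (by omega)
        rw [← hdec] at hk1
        rcases List.mem_cons.mp hk1 with he | he
        · rw [← hdec, ← he]
        · exact absurd he hxfree
      have h2 : preferMax k n (i₀-1) = (k-1) :: (preferMax k n (i₀-1)).tail := by
        have hdec := pm_cons (k := k) hn (i₀-1)
        have hk1 : (k-1) ∈ preferMax k n (i₀-1) := hmin (i₀-1) (by omega)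
        rw [← hdec] at hk1
        rcases List.mem_cons.mp hk1 with he | he
        · conv_lhs => rw [← hdec]
          rw [← he]
        · exact absurd he hxfree
      have := pm_index hAnodup (a := m') (b := i₀-1) (by omega) (le_refl _)
        (h1.trans h2.symm)
      omega
  -- balance
  have hbal : ∀ v, pmE k (preferMaxAux k n (i₀-1)) v = pmP k (preferMaxAux k n (i₀-1)) v := by
    intro v
    have hinv := pm_bal_inv hk hn (i₀-1) hAnodup v
    rw [htail] at hinv
    split_ifs at hinv <;> omega
  -- full out-degree implies full in-degree
  have hfull : ∀ v : List ℕ, v ++ [0] ∈ preferMaxAux k n (i₀-1) →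
      ∀ σ < k, σ :: v ∈ preferMaxAux k n (i₀-1) := by
    intro v hv σ hσ
    have hE : pmE k (preferMaxAux k n (i₀-1)) v = k := by
      unfold pmE
      rw [Finset.filter_true_of_mem, Finset.card_range]
      intro c hc
      rw [Finset.mem_range] at hc
      exact pm_G2 (c := 0) hv (by omega) (by omega)
    have hP : pmP k (preferMaxAux k n (i₀-1)) v = k := by rw [← hbal v]; exact hE
    have hset : (Finset.range k).filter (fun σ => σ :: v ∈ preferMaxAux k n (i₀-1))
        = Finset.range k := by
      refine Finset.eq_of_subset_of_card_le (Finset.filter_subset _ _) ?_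
      unfold pmP at hP
      rw [hP, Finset.card_range]
    have hσ' : σ ∈ Finset.range k := Finset.mem_range.mpr hσ
    rw [← hset, Finset.mem_filter] at hσ'
    exact hσ'.2
  have hL1 : ∀ u : List ℕ, u ∉ preferMaxAux k n (i₀-1) → u ≠ [] → u.headI < k →
      u.tail ++ [0] ∉ preferMaxAux k n (i₀-1) := by
    intro u hu hne hh hcon
    apply hu
    have hdec : u.headI :: u.tail = u := by
      cases u with
      | nil => exact absurd rfl hne
      | cons a l => rfl
    have := hfull u.tail hcon u.headI hh
    rwa [hdec] at this
  have hL2 : ∀ z : List ℕ, (k-1) ∉ z → ((k-1) :: z) ∉ preferMaxAux k n (i₀-1) →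
      z ++ [k-1] ∉ preferMaxAux k n (i₀-1) := by
    intro z hzf hzc hcon
    have hE1 : 0 < pmE k (preferMaxAux k n (i₀-1)) z := by
      unfold pmE
      rw [Finset.card_pos]
      exact ⟨k-1, Finset.mem_filter.mpr ⟨Finset.mem_range.mpr (by omega), hcon⟩⟩
    rw [hbal z] at hE1
    unfold pmP at hE1
    obtain ⟨σ, hσ⟩ := Finset.card_pos.mp hE1
    rw [Finset.mem_filter] at hσ
    have hmem := (hAW _ hσ.2).2.2
    rcases List.mem_cons.mp hmem with he | he
    · apply hzc
      rw [he]
      exact hσ.2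
    · exact hzf he
  have hw0A : List.replicate (n-1) 0 ++ [k-1] ∈ preferMaxAux k n (i₀-1) := by
    rw [← pm_zero]
    exact pm_mem_aux_of_le (by omega)
  -- the march to the contradiction
  have hmarch : ∀ z : List ℕ, (k-1) ∉ z → z.length = n-1 → (∀ x ∈ z, x < k) →
      ((k-1) :: z) ∉ preferMaxAux k n (i₀-1) → False := by
    intro z hzf hzl hzlt hzc
    have hstep : ∀ j, j ≤ n-1 →
        z.drop j ++ (k-1) :: List.replicate j 0 ∉ preferMaxAux k n (i₀-1) := by
      intro j
      induction j with
      | zero =>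
        intro _
        simpa using hL2 z hzf hzc
      | succ j ih =>
        intro hj
        have hmj := ih (by omega)
        have hdne : z.drop j ≠ [] := by
          intro he
          have := congrArg List.length he
          rw [List.length_drop, hzl] at this
          simp at this
          omega
        obtain ⟨c, rest, hcr⟩ : ∃ c rest, z.drop j = c :: rest := by
          cases hzd : z.drop j with
          | nil => exact absurd hzd hdne
          | cons c r => exact ⟨c, r, rfl⟩
        have hune : z.drop j ++ (k-1) :: List.replicate j 0 ≠ [] := by
          rw [hcr]; simp
        have huh : (z.drop j ++ (k-1) :: List.replicate j 0).headI < k := by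
          rw [hcr]
          have : c ∈ z := List.drop_subset j z (by rw [hcr]; exact List.mem_cons_self)
          exact hzlt c this
        have hres := hL1 _ hmj hune huh
        have htu : (z.drop j ++ (k-1) :: List.replicate j 0).tail ++ [0]
            = z.drop (j+1) ++ (k-1) :: List.replicate (j+1) 0 := by
          have hrest : z.drop (j+1) = rest := by
            rw [← List.drop_drop, hcr]
            rfl
          rw [hcr, hrest, List.replicate_succ']
          simp
        rw [htu] at hres
        exact hres
    have hfin := hstep (n-1) (le_refl _)
    have hdz : z.drop (n-1) = [] := List.drop_eq_nil_of_le (by rw [hzl])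
    rw [hdz, List.nil_append] at hfin
    exact hL2 (List.replicate (n-1) 0)
      (fun hm => by have := List.eq_of_mem_replicate hm; omega) hfin hw0A
  -- every word of the layer appears
  have hallW : ∀ u : List ℕ, u.length = n → (∀ x ∈ u, x < k) → (k-1) ∈ u →
      u ∈ preferMaxAux k n (i₀-1) := by
    have hmain : ∀ M : ℕ, ∀ u : List ℕ, u.length = n → (∀ x ∈ u, x < k) → (k-1) ∈ u →
        u ∉ preferMaxAux k n (i₀-1) →
        n - (u.reverse.takeWhile (fun x => x != (k-1))).length ≤ M → False := by
      intro M
      induction M with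
      | zero =>
        intro u hlen hlt hmem hu hM
        have hb : (u.reverse.takeWhile (fun x => x != (k-1))).length < u.reverse.length :=
          pm_takeWhile_lt (List.mem_reverse.mpr hmem)
        rw [List.length_reverse, hlen] at hb
        omega
      | succ M ih =>
        intro u hlen hlt hmem hu hM
        have hune : u ≠ [] := by
          intro h; rw [h] at hlen; simp at hlen; omega
        have hdec : u.headI :: u.tail = u := by
          cases u with
          | nil => exact absurd rfl hune
          | cons a l => rfl
        by_cases htl : (k-1) ∈ u.tail
        · -- case A: shift left, append 0
          have hu'len : (u.tail ++ [0]).length = n := by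
            rw [List.length_append, List.length_tail, hlen]
            simp; omega
          have hu'lt : ∀ x ∈ u.tail ++ [0], x < k := by
            intro x hx
            rcases List.mem_append.mp hx with h | h
            · exact hlt x (List.mem_of_mem_tail h)
            · simp at h; omega
          have hu'mem : (k-1) ∈ u.tail ++ [0] := List.mem_append.mpr (Or.inl htl)
          have hu'notA : u.tail ++ [0] ∉ preferMaxAux k n (i₀-1) :=
            hL1 u hu hune (hlt _ (hdec ▸ List.mem_cons_self))
          have hm1 : ((u.tail ++ [0]).reverse.takeWhile (fun x => x != (k-1))).length
              = (u.reverse.takeWhile (fun x => x != (k-1))).length + 1 := by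
            have h1 : (u.tail ++ [0]).reverse = 0 :: u.tail.reverse := by simp
            have h2 : u.reverse = u.tail.reverse ++ [u.headI] := by
              conv_lhs => rw [← hdec]
              simp
            rw [h1, h2, pm_takeWhile_append (List.mem_reverse.mpr htl), List.takeWhile_cons]
            have h0 : ((0:ℕ) != (k-1)) = true := by
              simp only [bne_iff_ne, ne_eq]
              omega
            rw [h0]
            simp
          have hb : (u.reverse.takeWhile (fun x => x != (k-1))).length < n := by
            have := pm_takeWhile_lt (l := u.reverse) (List.mem_reverse.mpr hmem)
            rw [List.length_reverse, hlen] at this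
            exact this
          exact ih _ hu'len hu'lt hu'mem hu'notA (by omega)
        · -- case B: head is k-1, run the march
          have hhead : u.headI = k-1 := by
            rw [← hdec] at hmem
            rcases List.mem_cons.mp hmem with he | he
            · exact he.symm
            · exact absurd he htl
          apply hmarch u.tail htl
            (by rw [List.length_tail, hlen])
            (fun x hx => hlt x (List.mem_of_mem_tail hx))
          have : (k-1) :: u.tail = u := by rw [← hhead]; exact hdec
          rw [this]
          exact hu
    intro u hlen hlt hmem
    by_contra hu
    exact hmain n u hlen hlt hmem hu (by omega)
  -- counting
  have hSfin : (preferMaxAux k n (i₀-1)).toFinset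
      = (pmWords k n).filter (fun u => (k-1) ∈ u) := by
    ext u
    rw [List.mem_toFinset, Finset.mem_filter, pm_mem_words]
    constructor
    · intro hu
      obtain ⟨h1, h2, h3⟩ := hAW u hu
      exact ⟨⟨h1, h2⟩, h3⟩
    · rintro ⟨⟨h1, h2⟩, h3⟩
      exact hallW u h1 h2 h3
  have hcomp : (pmWords k n).filter (fun u => ¬ (k-1) ∈ u) = pmWords (k-1) n := by
    ext u
    rw [Finset.mem_filter, pm_mem_words, pm_mem_words]
    constructor
    · rintro ⟨⟨h1, h2⟩, h3⟩
      refine ⟨h1, fun x hx => ?_⟩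
      have hxk := h2 x hx
      have hxne : x ≠ k-1 := fun he => h3 (he ▸ hx)
      omega
    · rintro ⟨h1, h2⟩
      refine ⟨⟨h1, fun x hx => by have := h2 x hx; omega⟩, fun hm => ?_⟩
      have := h2 _ hm
      omega
  have hcards := Finset.card_filter_add_card_filter_not
    (s := pmWords k n) (p := fun u => (k-1) ∈ u)
  rw [hcomp, pm_card_words, pm_card_words] at hcards
  have hlenA : (preferMaxAux k n (i₀-1)).length = i₀ := by
    rw [pm_aux_length]; omega
  have hfincard : (preferMaxAux k n (i₀-1)).toFinset.card = i₀ := by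
    rw [List.toFinset_card_of_nodup hAnodup, hlenA]
  rw [hSfin] at hfincard
  omega
end
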